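/- arXiv:2412.04932 — 2 statements merged into one kernel-verified Lean document; each statement's English description precedes it below -/
import Mathlib

section
/- For n ≥ 2, the natural homomorphism ι_J : J_n → VJ_n from the cactus group to the virtual cactus group, sending x_{p,q} to x_{p,q} for all 1 ≤ p < q ≤ n, is injective. -/
/-- Indices of the cactus generators `x_{p,q}`, `1 ≤ p < q ≤ n`. -/
def JIdx (n : ℕ) : Type := {pq : ℕ × ℕ // 1 ≤ pq.1 ∧ pq.1 < pq.2 ∧ pq.2 ≤ n}

/-- Indices of the symmetric-group generators `ρ_i`, `1 ≤ i ≤ n - 1`. -/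
def RIdx (n : ℕ) : Type := {i : ℕ // 1 ≤ i ∧ i + 1 ≤ n}

/-- Generators of the virtual cactus group: the `x_{p,q}` and the `ρ_i`. -/
def VJGen (n : ℕ) : Type := JIdx n ⊕ RIdx n

/-- The generator `x_{p,q}` in the free group on the cactus generators (junk value `1` for
invalid indices). -/
def XJ (n p q : ℕ) : FreeGroup (JIdx n) :=
  if h : 1 ≤ p ∧ p < q ∧ q ≤ n then FreeGroup.of ⟨(p, q), h⟩ else 1

/-- The generator `x_{p,q}` in the free group on the virtual cactus generators. -/
def XV (n p q : ℕ) : FreeGroup (VJGen n) :=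
  if h : 1 ≤ p ∧ p < q ∧ q ≤ n then FreeGroup.of (Sum.inl ⟨(p, q), h⟩) else 1

/-- The generator `ρ_i` in the free group on the virtual cactus generators. -/
def RV (n i : ℕ) : FreeGroup (VJGen n) :=
  if h : 1 ≤ i ∧ i + 1 ≤ n then FreeGroup.of (Sum.inr ⟨i, h⟩) else 1

/-- The word `ρ_q ρ_{q-1} ⋯ ρ_p`. -/
def rhoDesc (n p q : ℕ) : FreeGroup (VJGen n) :=
  ((List.range' p (q + 1 - p)).reverse.map (RV n)).prod

/-- The defining relators (j1)–(j3) of the cactus group `J_n`. -/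
def JRels (n : ℕ) : Set (FreeGroup (JIdx n)) :=
  {r | ∃ p q : ℕ, (1 ≤ p ∧ p < q ∧ q ≤ n) ∧ r = XJ n p q ^ 2} ∪
  {r | ∃ p q m k : ℕ, (1 ≤ p ∧ p < q ∧ q ≤ n) ∧ (1 ≤ m ∧ m < k ∧ k ≤ n) ∧
      (q < m ∨ k < p) ∧ r = XJ n p q * XJ n m k * (XJ n m k * XJ n p q)⁻¹} ∪
  {r | ∃ p q m k : ℕ, (1 ≤ p ∧ p < q ∧ q ≤ n) ∧ (1 ≤ m ∧ m < k ∧ k ≤ n) ∧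
      (p ≤ m ∧ k ≤ q) ∧
      r = XJ n p q * XJ n m k * (XJ n (p + q - k) (p + q - m) * XJ n p q)⁻¹}

/-- The **cactus group** `J_n`. -/
abbrev JGroup (n : ℕ) : Type := PresentedGroup (JRels n)

/-- The defining relators (j1)–(j3), (s1)–(s3), (m1), (m2) of the virtual cactus group. -/
def VJRels (n : ℕ) : Set (FreeGroup (VJGen n)) :=
  {r | ∃ p q : ℕ, (1 ≤ p ∧ p < q ∧ q ≤ n) ∧ r = XV n p q ^ 2} ∪
  {r | ∃ p q m k : ℕ, (1 ≤ p ∧ p < q ∧ q ≤ n) ∧ (1 ≤ m ∧ m < k ∧ k ≤ n) ∧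
      (q < m ∨ k < p) ∧ r = XV n p q * XV n m k * (XV n m k * XV n p q)⁻¹} ∪
  {r | ∃ p q m k : ℕ, (1 ≤ p ∧ p < q ∧ q ≤ n) ∧ (1 ≤ m ∧ m < k ∧ k ≤ n) ∧
      (p ≤ m ∧ k ≤ q) ∧
      r = XV n p q * XV n m k * (XV n (p + q - k) (p + q - m) * XV n p q)⁻¹} ∪
  {r | ∃ i : ℕ, (1 ≤ i ∧ i + 1 ≤ n) ∧ r = RV n i ^ 2} ∪
  {r | ∃ i j : ℕ, (1 ≤ i ∧ i + 1 ≤ n) ∧ (1 ≤ j ∧ j + 1 ≤ n) ∧ (j = i + 1 ∨ i = j + 1) ∧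
      r = RV n i * RV n j * RV n i * (RV n j * RV n i * RV n j)⁻¹} ∪
  {r | ∃ i j : ℕ, (1 ≤ i ∧ i + 1 ≤ n) ∧ (1 ≤ j ∧ j + 1 ≤ n) ∧ (i + 1 < j ∨ j + 1 < i) ∧
      r = RV n i * RV n j * (RV n j * RV n i)⁻¹} ∪
  {r | ∃ i p q : ℕ, (1 ≤ i ∧ i + 1 ≤ n) ∧ (1 ≤ p ∧ p < q ∧ q ≤ n) ∧
      (i + 1 < p ∨ q + 1 ≤ i) ∧ r = RV n i * XV n p q * (XV n p q * RV n i)⁻¹} ∪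
  {r | ∃ p q : ℕ, (1 ≤ p ∧ p < q ∧ q < n) ∧
      r = XV n p q * rhoDesc n p q * (rhoDesc n p q * XV n (p + 1) (q + 1))⁻¹}

/-- The **virtual cactus group** `VJ_n`. -/
abbrev VJGroup (n : ℕ) : Type := PresentedGroup (VJRels n)



namespace CactusTrace

noncomputable section
open Classical List Relation

/-- The commutation relation on letters (finite subsets of ℕ as `Set ℕ`). -/
def Rr (A B : Set ℕ) : Prop := A ∩ B = ∅ ∨ A ⊂ B ∨ B ⊂ A

lemma Rr.symm' {A B : Set ℕ} (h : Rr A B) : Rr B A := by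
  rcases h with h | h | h
  · exact Or.inl (by rw [Set.inter_comm] at h; exact h)
  · exact Or.inr (Or.inr h)
  · exact Or.inr (Or.inl h)

lemma Rr_irrefl {A : Set ℕ} (hA : A.Nonempty) : ¬ Rr A A := by
  rintro (h | h | h)
  · rw [Set.inter_self] at h; exact hA.ne_empty h
  · exact h.2 h.1
  · exact h.2 h.1

abbrev Lst := List (Set ℕ)

/-- Scan for a deletable occurrence of `A`: from the head (newest), pass through letters
commuting with `A`; delete the first occurrence of `A` reached this way. -/
def dFn (A : Set ℕ) : Lst → Option Lst
  | [] => none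
  | B :: l => if B = A then some l else if Rr A B then (dFn A l).map (B :: ·) else none

/-- One step of the trace action: delete if possible, else push. -/
def TFn (A : Set ℕ) (l : Lst) : Lst := (dFn A l).getD (A :: l)

/-- Elementary commutation move. -/
def Step (l l' : Lst) : Prop := ∃ x y A B, Rr A B ∧ l = x ++ A :: B :: y ∧ l' = x ++ B :: A :: y

lemma Step.symm' {l l' : Lst} (h : Step l l') : Step l' l := by
  obtain ⟨x, y, A, B, hR, h1, h2⟩ := h
  exact ⟨x, y, B, A, hR.symm', h2, h1⟩

lemma Step.length {l l' : Lst} (h : Step l l') : l.length = l'.length := by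
  obtain ⟨x, y, A, B, _, h1, h2⟩ := h; subst h1; subst h2; simp

/-- Traces: lists modulo commutation. -/
abbrev Tr := Quot Step

abbrev mkT (l : Lst) : Tr := Quot.mk Step l

lemma mkT_eq_of_step {l l' : Lst} (h : Step l l') : mkT l = mkT l' := Quot.sound h

lemma length_eq_of_eqvGen {l l' : Lst} (h : EqvGen Step l l') : l.length = l'.length := by
  induction h with
  | rel _ _ h => exact h.length
  | refl => rfl
  | symm _ _ _ ih => exact ih.symm
  | trans _ _ _ _ _ ih1 ih2 => exact ih1.trans ih2

lemma length_eq_of_mkT_eq {l l' : Lst} (h : mkT l = mkT l') : l.length = l'.length :=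
  length_eq_of_eqvGen (Quot.eqvGen_exact h)

lemma mkT_cons_of_eqvGen {l l' : Lst} (C : Set ℕ) (h : EqvGen Step l l') :
    mkT (C :: l) = mkT (C :: l') := by
  induction h with
  | rel a b h =>
      obtain ⟨x, y, A, B, hR, h1, h2⟩ := h
      exact Quot.sound ⟨C :: x, y, A, B, hR, by simp [h1], by simp [h2]⟩
  | refl => rfl
  | symm _ _ _ ih => exact ih.symm
  | trans _ _ _ _ _ ih1 ih2 => exact ih1.trans ih2

lemma mkT_cons {l l' : Lst} (C : Set ℕ) (h : mkT l = mkT l') : mkT (C :: l) = mkT (C :: l') :=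
  mkT_cons_of_eqvGen C (Quot.eqvGen_exact h)

/-- Moving a letter commuting with a prefix through that prefix. -/
lemma mkT_move {A : Set ℕ} : ∀ (x : Lst), (∀ B ∈ x, Rr A B) → ∀ y : Lst,
    mkT (A :: (x ++ y)) = mkT (x ++ A :: y) := by
  intro x
  induction x with
  | nil => intro _ _; rfl
  | cons B x ih =>
      intro hx y
      have h1 : mkT (A :: B :: (x ++ y)) = mkT (B :: A :: (x ++ y)) :=
        Quot.sound ⟨[], x ++ y, A, B, hx B (by simp), rfl, rfl⟩
      calc mkT (A :: (B :: x ++ y)) = mkT (B :: A :: (x ++ y)) := h1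
        _ = mkT (B :: (x ++ A :: y)) := mkT_cons B (ih (fun C hC => hx C (by simp [hC])) y)
        _ = mkT ((B :: x) ++ A :: y) := rfl

lemma dFn_nil {A : Set ℕ} : dFn A [] = none := rfl

lemma dFn_cons {A B : Set ℕ} {l : Lst} :
    dFn A (B :: l) = if B = A then some l else
      if Rr A B then (dFn A l).map (B :: ·) else none := rfl

/-- Structure of a successful deletion scan. -/
lemma dFn_some_struct {A : Set ℕ} : ∀ {l r : Lst}, dFn A l = some r →
    ∃ x y, l = x ++ A :: y ∧ r = x ++ y ∧ ∀ B ∈ x, Rr A B ∧ B ≠ A := by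
  intro l
  induction l with
  | nil => intro r h; simp [dFn] at h
  | cons B l ih =>
      intro r h
      rw [dFn_cons] at h
      split_ifs at h with h1 h2
      · exact ⟨[], l, by simp [h1], by simpa using h.symm, by simp⟩
      · rcases Option.map_eq_some_iff.mp h with ⟨r', hr', rfl⟩
        obtain ⟨x, y, hxy, hr, hx⟩ := ih hr'
        exact ⟨B :: x, y, by simp [hxy], by simp [hr],
          by simpa [h2, h1] using fun C hC => hx C hC⟩

lemma dFn_none_iff {A : Set ℕ} {l : Lst} :
    dFn A l = none ↔ ¬ ∃ x y, l = x ++ A :: y ∧ ∀ B ∈ x, Rr A B := by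
  constructor
  · intro h ⟨x, y, hxy, hx⟩
    subst hxy
    induction x with
    | nil => rw [show ([] : Lst) ++ A :: y = A :: y from rfl, dFn_cons, if_pos rfl] at h; exact Option.some_ne_none _ h
    | cons B x ih =>
        rw [cons_append, dFn_cons] at h
        by_cases h1 : B = A
        · rw [if_pos h1] at h; exact Option.some_ne_none _ h
        · rw [if_neg h1, if_pos (hx B (by simp))] at h
          exact ih (fun C hC => hx C (by simp [hC])) (by simpa using h)
  · intro h
    cases hd : dFn A l with
    | none => rfl
    | some r =>
        obtain ⟨x, y, hxy, _, hx⟩ := dFn_some_struct hd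
        exact absurd ⟨x, y, hxy, fun B hB => (hx B hB).1⟩ h

end
end CactusTrace

namespace CactusTrace
noncomputable section
open Classical List Relation

lemma ne_of_Rr {A B : Set ℕ} (hAB : Rr A B) (hA : ¬ Rr A A) : A ≠ B := by
  rintro rfl; exact hA hAB

lemma dFn_comm_some_some {A B : Set ℕ} (hAB : Rr A B) (hA : ¬ Rr A A) (hB : ¬ Rr B B) :
    ∀ {l rA rB : Lst}, dFn A l = some rA → dFn B l = some rB →
      ∃ s, dFn B rA = some s ∧ dFn A rB = some s := by
  intro l
  induction l with
  | nil => intro rA rB h; simp [dFn_nil] at h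
  | cons c l ih =>
      intro rA rB hA' hB'
      rw [dFn_cons] at hA' hB'
      by_cases hcA : c = A
      · rw [if_pos hcA] at hA'
        rw [if_neg (by rw [hcA]; exact (ne_of_Rr hAB hA)), if_pos (by rw [hcA]; exact hAB.symm')] at hB'
        rcases Option.map_eq_some_iff.mp hB' with ⟨rB', hrB', rfl⟩
        refine ⟨rB', ?_, ?_⟩
        · rw [← Option.some_inj.mp hA']; exact hrB'
        · rw [dFn_cons, if_pos hcA]
      · rw [if_neg hcA] at hA'
        by_cases hcB : c = B
        · rw [if_pos hcB] at hB'
          rw [if_pos (by rw [hcB]; exact hAB)] at hA'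
          rcases Option.map_eq_some_iff.mp hA' with ⟨rA', hrA', rfl⟩
          refine ⟨rA', ?_, ?_⟩
          · rw [dFn_cons, if_pos hcB]
          · rw [← Option.some_inj.mp hB']; exact hrA'
        · rw [if_neg hcB] at hB'
          by_cases hRAc : Rr A c
          · rw [if_pos hRAc] at hA'
            by_cases hRBc : Rr B c
            · rw [if_pos hRBc] at hB'
              rcases Option.map_eq_some_iff.mp hA' with ⟨rA', hrA', rfl⟩
              rcases Option.map_eq_some_iff.mp hB' with ⟨rB', hrB', rfl⟩
              obtain ⟨s, hs1, hs2⟩ := ih hrA' hrB'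
              refine ⟨c :: s, ?_, ?_⟩
              · rw [dFn_cons, if_neg hcB, if_pos hRBc, hs1]; rfl
              · rw [dFn_cons, if_neg hcA, if_pos hRAc, hs2]; rfl
            · rw [if_neg hRBc] at hB'; exact absurd hB' (by simp)
          · rw [if_neg hRAc] at hA'; exact absurd hA' (by simp)

lemma dFn_comm_some_none {A B : Set ℕ} (hAB : Rr A B) (hA : ¬ Rr A A) (hB : ¬ Rr B B) :
    ∀ {l rA : Lst}, dFn A l = some rA → dFn B l = none → dFn B rA = none := by
  intro l
  induction l with
  | nil => intro rA h; simp [dFn_nil] at h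
  | cons c l ih =>
      intro rA hA' hB'
      rw [dFn_cons] at hA' hB'
      by_cases hcA : c = A
      · rw [if_pos hcA] at hA'
        rw [if_neg (by rw [hcA]; exact (ne_of_Rr hAB hA)), if_pos (by rw [hcA]; exact hAB.symm')] at hB'
        rw [← Option.some_inj.mp hA']
        exact Option.map_eq_none_iff.mp hB'
      · rw [if_neg hcA] at hA'
        have hcB : c ≠ B := by
          rintro rfl
          rw [if_pos rfl] at hB'; exact Option.some_ne_none _ hB'
        rw [if_neg hcB] at hB'
        by_cases hRAc : Rr A c
        · rw [if_pos hRAc] at hA'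
          rcases Option.map_eq_some_iff.mp hA' with ⟨rA', hrA', rfl⟩
          rw [dFn_cons, if_neg hcB]
          by_cases hRBc : Rr B c
          · rw [if_pos hRBc] at hB' ⊢
            rw [ih hrA' (Option.map_eq_none_iff.mp hB')]; rfl
          · rw [if_neg hRBc]
        · rw [if_neg hRAc] at hA'; exact absurd hA' (by simp)

/-- Commutation of the trace operations. -/
lemma TFn_comm {A B : Set ℕ} (hAB : Rr A B) (hA : ¬ Rr A A) (hB : ¬ Rr B B) (l : Lst) :
    mkT (TFn A (TFn B l)) = mkT (TFn B (TFn A l)) := by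
  have hABne : A ≠ B := ne_of_Rr hAB hA
  cases hdA : dFn A l with
  | some rA =>
      cases hdB : dFn B l with
      | some rB =>
          obtain ⟨s, hs1, hs2⟩ := dFn_comm_some_some hAB hA hB hdA hdB
          simp only [TFn, hdA, hdB, Option.getD_some, hs1, hs2]
      | none =>
          have h1 : dFn B rA = none := dFn_comm_some_none hAB hA hB hdA hdB
          have h2 : dFn A (B :: l) = some (B :: rA) := by
            rw [dFn_cons, if_neg hABne.symm, if_pos hAB, hdA]; rfl
          simp only [TFn, hdA, hdB, Option.getD_some, Option.getD_none, h1, h2]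
  | none =>
      cases hdB : dFn B l with
      | some rB =>
          have h1 : dFn A rB = none := dFn_comm_some_none hAB.symm' hB hA hdB hdA
          have h2 : dFn B (A :: l) = some (A :: rB) := by
            rw [dFn_cons, if_neg hABne, if_pos hAB.symm', hdB]; rfl
          simp only [TFn, hdA, hdB, Option.getD_some, Option.getD_none, h1, h2]
      | none =>
          have h2 : dFn A (B :: l) = none := by
            rw [dFn_cons, if_neg hABne.symm, if_pos hAB, hdA]; rfl
          have h3 : dFn B (A :: l) = none := by
            rw [dFn_cons, if_neg hABne, if_pos hAB.symm', hdB]; rfl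
          simp only [TFn, hdA, hdB, Option.getD_none, h2, h3]
          exact Quot.sound ⟨[], l, A, B, hAB, rfl, rfl⟩

end
end CactusTrace

namespace CactusTrace
noncomputable section
open Classical List Relation

/-- A list is reduced if it contains no cancellable pair. -/
def Red (l : Lst) : Prop := ∀ x B y z, l = x ++ B :: (y ++ B :: z) → ∃ C ∈ y, ¬ Rr B C

lemma Red_nil : Red ([] : Lst) := by
  intro x B y z h
  exact absurd h (by simp)

lemma Red_push {A : Set ℕ} {l : Lst} (hRed : Red l) (hnd : dFn A l = none) : Red (A :: l) := by
  intro x B y z hdec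
  cases x with
  | nil =>
      simp only [nil_append, cons.injEq] at hdec
      obtain ⟨rfl, rfl⟩ := hdec
      by_contra h'
      push_neg at h'
      exact (dFn_none_iff.mp hnd) ⟨y, z, rfl, h'⟩
  | cons x₀ x' =>
      simp only [cons_append, cons.injEq] at hdec
      exact hRed x' B y z hdec.2

lemma Red_del {A : Set ℕ} {l r : Lst} (hRed : Red l) (h : dFn A l = some r) : Red r := by
  obtain ⟨p, s, hl, hr, hp⟩ := dFn_some_struct h
  subst hl; subst hr
  intro x B y z hdec
  rcases append_eq_append_iff.mp hdec with ⟨a, hxa, hsa⟩ | ⟨c, hpc, hc⟩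
  · -- x = p ++ a, s = a ++ B :: (y ++ B :: z)
    subst hxa; subst hsa
    exact hRed (p ++ A :: a) B y z (by simp)
  · -- p = x ++ c, B :: (y ++ B :: z) = c ++ s
    subst hpc
    cases c with
    | nil =>
        simp only [nil_append] at hc
        exact hRed (x ++ [A]) B y z (by simp [← hc])
    | cons c₀ c' =>
        simp only [cons_append, cons.injEq] at hc
        obtain ⟨rfl, hc⟩ := hc
        have hBA : Rr B A := (hp B (by simp)).1.symm'
        rcases append_eq_append_iff.mp hc.symm with ⟨e, hye, hse⟩ | ⟨d, hc'd, hdz⟩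
        · -- y = c' ++ e, s = e ++ B :: z
          subst hye; subst hse
          obtain ⟨C, hC, hC2⟩ := hRed x B (c' ++ A :: e) z (by simp)
          rcases mem_append.mp hC with hC | hC
          · exact ⟨C, by simp [hC], hC2⟩
          · simp only [mem_cons] at hC
            rcases hC with rfl | hC
            · exact absurd hBA hC2
            · exact ⟨C, by simp [hC], hC2⟩
        · -- c' = y ++ d, B :: z = d ++ s
          subst hc'd
          cases d with
          | nil =>
              simp only [nil_append] at hdz
              obtain ⟨C, hC, hC2⟩ := hRed x B (y ++ [A]) z (by simp [← hdz])
              rcases mem_append.mp hC with hC | hC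
              · exact ⟨C, hC, hC2⟩
              · simp only [mem_singleton] at hC; subst hC
                exact absurd hBA hC2
          | cons d₀ d' =>
              simp only [cons_eq_append_iff] at hdz
              rcases hdz with ⟨h1, h2⟩ | ⟨a', ha1, ha2⟩
              · exact absurd h1 (by simp)
              · simp only [cons.injEq] at ha1
                obtain ⟨rfl, rfl⟩ := ha1
                subst ha2
                obtain ⟨C, hC, hC2⟩ := hRed x d₀ y (d' ++ A :: s) (by simp)
                exact ⟨C, hC, hC2⟩

/-- The trace operation is an involution on reduced lists. -/
lemma TFn_invol {A : Set ℕ} (hA : ¬ Rr A A) {l : Lst} (hRed : Red l) :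
    mkT (TFn A (TFn A l)) = mkT l := by
  cases hd : dFn A l with
  | none =>
      have h1 : dFn A (A :: l) = some l := by rw [dFn_cons, if_pos rfl]
      simp only [TFn, hd, Option.getD_none, h1, Option.getD_some]
  | some r =>
      obtain ⟨p, s, hl, hr, hp⟩ := dFn_some_struct hd
      have hnone : dFn A r = none := by
        rw [dFn_none_iff]
        rintro ⟨x, y, hxy, hx⟩
        rw [hr] at hxy
        rcases append_eq_append_iff.mp hxy with ⟨a, hxa, hsa⟩ | ⟨c, hpc, hc⟩
        · -- x = p ++ a, s = a ++ A :: y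
          obtain ⟨C, hC, hC2⟩ := hRed p A a y (by rw [hl, hsa])
          exact hC2 (hx C (by simp [hxa, hC]))
        · cases c with
          | nil =>
              simp only [nil_append] at hc
              obtain ⟨C, hC, _⟩ := hRed p A [] y (by rw [hl, ← hc]; simp)
              simp at hC
          | cons c₀ c' =>
              simp only [cons_append, cons.injEq] at hc
              exact (hp A (by simp [hpc, ← hc.1])).2 rfl
      simp only [TFn, hd, Option.getD_some, hnone, Option.getD_none]
      rw [hr, hl]
      exact mkT_move p (fun B hB => (hp B hB).1) s

/-- Compatibility of the scan with a single commutation move. -/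
lemma dFn_step {A : Set ℕ} (hA : ¬ Rr A A) : ∀ (x : Lst) (C D : Set ℕ) (y : Lst), Rr C D →
    (dFn A (x ++ C :: D :: y) = none ∧ dFn A (x ++ D :: C :: y) = none) ∨
    (∃ r r', dFn A (x ++ C :: D :: y) = some r ∧ dFn A (x ++ D :: C :: y) = some r' ∧
      mkT r = mkT r') := by
  intro x
  induction x with
  | nil =>
      intro C D y hRr
      simp only [nil_append]
      by_cases hCA : C = A
      · have hRrAD : Rr A D := hCA ▸ hRr
        have hDA : D ≠ A := fun h => hA (h ▸ hRrAD)
        refine Or.inr ⟨D :: y, D :: y, ?_, ?_, rfl⟩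
        · rw [dFn_cons, if_pos hCA]
        · rw [dFn_cons, if_neg hDA, if_pos hRrAD, dFn_cons, if_pos hCA]; rfl
      · by_cases hDA : D = A
        · have hRrAC : Rr A C := hDA ▸ hRr.symm'
          refine Or.inr ⟨C :: y, C :: y, ?_, ?_, rfl⟩
          · rw [dFn_cons, if_neg hCA, if_pos hRrAC, dFn_cons, if_pos hDA]; rfl
          · rw [dFn_cons, if_pos hDA]
        · by_cases hAC : Rr A C
          · by_cases hAD : Rr A D
            · cases hy : dFn A y with
              | none =>
                  refine Or.inl ⟨?_, ?_⟩
                  · rw [dFn_cons, if_neg hCA, if_pos hAC, dFn_cons, if_neg hDA, if_pos hAD, hy]; rfl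
                  · rw [dFn_cons, if_neg hDA, if_pos hAD, dFn_cons, if_neg hCA, if_pos hAC, hy]; rfl
              | some s =>
                  refine Or.inr ⟨C :: D :: s, D :: C :: s, ?_, ?_, ?_⟩
                  · rw [dFn_cons, if_neg hCA, if_pos hAC, dFn_cons, if_neg hDA, if_pos hAD, hy]; rfl
                  · rw [dFn_cons, if_neg hDA, if_pos hAD, dFn_cons, if_neg hCA, if_pos hAC, hy]; rfl
                  · exact Quot.sound ⟨[], s, C, D, hRr, rfl, rfl⟩
            · refine Or.inl ⟨?_, ?_⟩
              · rw [dFn_cons, if_neg hCA, if_pos hAC, dFn_cons, if_neg hDA, if_neg hAD]; rfl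
              · rw [dFn_cons, if_neg hDA, if_neg hAD]
          · by_cases hAD : Rr A D
            · refine Or.inl ⟨?_, ?_⟩
              · rw [dFn_cons, if_neg hCA, if_neg hAC]
              · rw [dFn_cons, if_neg hDA, if_pos hAD, dFn_cons, if_neg hCA, if_neg hAC]; rfl
            · refine Or.inl ⟨?_, ?_⟩
              · rw [dFn_cons, if_neg hCA, if_neg hAC]
              · rw [dFn_cons, if_neg hDA, if_neg hAD]
  | cons c x ih =>
      intro C D y hRr
      simp only [cons_append]
      by_cases hcA : c = A
      · refine Or.inr ⟨x ++ C :: D :: y, x ++ D :: C :: y, ?_, ?_, ?_⟩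
        · rw [dFn_cons, if_pos hcA]
        · rw [dFn_cons, if_pos hcA]
        · exact Quot.sound ⟨x, y, C, D, hRr, rfl, rfl⟩
      · by_cases hAc : Rr A c
        · rcases ih C D y hRr with ⟨h1, h2⟩ | ⟨r, r', h1, h2, h3⟩
          · refine Or.inl ⟨?_, ?_⟩
            · rw [dFn_cons, if_neg hcA, if_pos hAc, h1]; rfl
            · rw [dFn_cons, if_neg hcA, if_pos hAc, h2]; rfl
          · refine Or.inr ⟨c :: r, c :: r', ?_, ?_, mkT_cons c h3⟩
            · rw [dFn_cons, if_neg hcA, if_pos hAc, h1]; rfl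
            · rw [dFn_cons, if_neg hcA, if_pos hAc, h2]; rfl
        · refine Or.inl ⟨?_, ?_⟩
          · rw [dFn_cons, if_neg hcA, if_neg hAc]
          · rw [dFn_cons, if_neg hcA, if_neg hAc]

/-- The trace operation respects single commutation moves. -/
lemma TFn_step {A : Set ℕ} (hA : ¬ Rr A A) {l l' : Lst} (h : Step l l') :
    mkT (TFn A l) = mkT (TFn A l') := by
  obtain ⟨x, y, C, D, hRr, rfl, rfl⟩ := h
  rcases dFn_step hA x C D y hRr with ⟨h1, h2⟩ | ⟨r, r', h1, h2, h3⟩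
  · simp only [TFn, h1, h2, Option.getD_none]
    exact mkT_cons A (Quot.sound ⟨x, y, C, D, hRr, rfl, rfl⟩)
  · simp only [TFn, h1, h2, Option.getD_some]
    exact h3

lemma TFn_mkT {A : Set ℕ} (hA : ¬ Rr A A) {l l' : Lst} (h : mkT l = mkT l') :
    mkT (TFn A l) = mkT (TFn A l') := by
  have h' := Quot.eqvGen_exact h
  clear h
  induction h' with
  | rel a b h => exact TFn_step hA h
  | refl => rfl
  | symm _ _ _ ih => exact ih.symm
  | trans _ _ _ _ _ ih1 ih2 => exact ih1.trans ih2

end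
end CactusTrace

namespace CactusTrace
noncomputable section
open Classical List Relation

lemma Red_TFn {A : Set ℕ} {l : Lst} (hRed : Red l) : Red (TFn A l) := by
  cases hd : dFn A l with
  | none => rw [TFn, hd, Option.getD_none]; exact Red_push hRed hd
  | some r => rw [TFn, hd, Option.getD_some]; exact Red_del hRed hd

/-- Reduced traces. -/
def X : Type := {t : Tr // ∃ l, Red l ∧ t = mkT l}

def TQ (A : Set ℕ) (hA : ¬ Rr A A) : Tr → Tr :=
  Quot.lift (fun l => mkT (TFn A l)) (fun _ _ h => TFn_step hA h)

lemma TQ_mk {A : Set ℕ} (hA : ¬ Rr A A) (l : Lst) : TQ A hA (mkT l) = mkT (TFn A l) := rfl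

def TXf (A : Set ℕ) (hA : A.Nonempty) : X → X := fun t =>
  ⟨TQ A (Rr_irrefl hA) t.1, by
    obtain ⟨l, hR, hl⟩ := t.2
    exact ⟨TFn A l, Red_TFn hR, by rw [hl, TQ_mk]⟩⟩

lemma TXf_invol (A : Set ℕ) (hA : A.Nonempty) : Function.Involutive (TXf A hA) := by
  intro t
  obtain ⟨l, hR, hl⟩ := t.2
  apply Subtype.ext
  show TQ A (Rr_irrefl hA) (TQ A (Rr_irrefl hA) t.1) = t.1
  rw [hl, TQ_mk, TQ_mk]
  exact TFn_invol (Rr_irrefl hA) hR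

/-- The generator of the trace action, as a permutation of reduced traces. -/
def TX (A : Set ℕ) (hA : A.Nonempty) : Equiv.Perm X :=
  Function.Involutive.toPerm _ (TXf_invol A hA)

lemma TX_apply {A : Set ℕ} (hA : A.Nonempty) (t : X) : TX A hA t = TXf A hA t := rfl

lemma TX_sq (A : Set ℕ) (hA : A.Nonempty) : TX A hA * TX A hA = 1 := by
  ext t
  exact TXf_invol A hA t

lemma TX_comm {A B : Set ℕ} (hA : A.Nonempty) (hB : B.Nonempty) (hAB : Rr A B) :
    TX A hA * TX B hB = TX B hB * TX A hA := by
  ext t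
  obtain ⟨l, hR, hl⟩ := t.2
  simp only [Equiv.Perm.mul_apply, TX_apply]
  apply Subtype.ext
  show TQ A (Rr_irrefl hA) (TQ B (Rr_irrefl hB) t.1) = TQ B (Rr_irrefl hB) (TQ A (Rr_irrefl hA) t.1)
  rw [hl, TQ_mk, TQ_mk, TQ_mk, TQ_mk]
  exact TFn_comm hAB (Rr_irrefl hA) (Rr_irrefl hB) l

/-- The empty (base point) reduced trace. -/
def x0 : X := ⟨mkT [], [], Red_nil, rfl⟩

end
end CactusTrace

namespace CactusTrace
noncomputable section
open Classical List Relation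

/-! ### Interval-reversal permutations -/

def wfun (p q : ℕ) : ℕ → ℕ := fun x => if p ≤ x ∧ x ≤ q then p + q - x else x

lemma wfun_invol (p q : ℕ) : Function.Involutive (wfun p q) := by
  intro x
  simp only [wfun]
  split_ifs <;> omega

/-- Reversal of the interval `[p,q]`. -/
def W (p q : ℕ) : Equiv.Perm ℕ := Function.Involutive.toPerm _ (wfun_invol p q)

lemma W_apply (p q x : ℕ) : W p q x = if p ≤ x ∧ x ≤ q then p + q - x else x := rfl

lemma W_symm (p q : ℕ) : (W p q).symm = W p q := rfl

lemma W_sq (p q : ℕ) : W p q * W p q = 1 := by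
  ext x
  simp only [Equiv.Perm.mul_apply, Equiv.Perm.one_apply, W_apply]
  split_ifs <;> omega

lemma W_comm (p q m k : ℕ) (h : q < m ∨ k < p) : W p q * W m k = W m k * W p q := by
  ext x
  simp only [Equiv.Perm.mul_apply, W_apply]
  split_ifs <;> omega

lemma W_nested (p q m k : ℕ) (hpm : p ≤ m) (hmk : m ≤ k) (hkq : k ≤ q) :
    W m k * W p q = W p q * W (p + q - k) (p + q - m) := by
  ext x
  simp only [Equiv.Perm.mul_apply, W_apply]
  split_ifs <;> omega

/-- Adjacent transposition. -/
def SI (i : ℕ) : Equiv.Perm ℕ := W i (i + 1)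

lemma SI_braid (i : ℕ) : SI i * SI (i + 1) * SI i = SI (i + 1) * SI i * SI (i + 1) := by
  ext x
  simp only [SI, Equiv.Perm.mul_apply, W_apply]
  split_ifs <;> omega

/-! ### The cycle `s_p s_{p+1} ⋯ s_q` -/

def cfun (p q : ℕ) : ℕ → ℕ := fun x =>
  if p ≤ x ∧ x ≤ q then x + 1 else if x = q + 1 ∧ p ≤ q + 1 then p else x

def cgun (p q : ℕ) : ℕ → ℕ := fun x =>
  if p + 1 ≤ x ∧ x ≤ q + 1 then x - 1 else if x = p ∧ p ≤ q + 1 then q + 1 else x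

/-- The cycle `(q+1, q, …, p)`, i.e. `x ↦ x+1` on `[p,q]` and `q+1 ↦ p`. -/
def CY (p q : ℕ) : Equiv.Perm ℕ where
  toFun := cfun p q
  invFun := cgun p q
  left_inv := by intro x; simp only [cfun, cgun]; split_ifs <;> omega
  right_inv := by intro x; simp only [cfun, cgun]; split_ifs <;> omega

lemma CY_apply (p q x : ℕ) : CY p q x = cfun p q x := by
  show (⟨cfun p q, cgun p q, _, _⟩ : Equiv.Perm ℕ) x = cfun p q x
  rfl

lemma CY_symm_apply (p q x : ℕ) : (CY p q).symm x = cgun p q x := by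
  show (⟨cfun p q, cgun p q, _, _⟩ : Equiv.Perm ℕ).symm x = cgun p q x
  rfl

lemma CY_self (p : ℕ) : CY p p = SI p := by
  ext x
  simp only [CY_apply, cfun, SI, W_apply]
  split_ifs <;> omega

lemma SI_mul_CY (p len : ℕ) : SI p * CY (p + 1) (p + (len + 1)) = CY p (p + (len + 1)) := by
  ext x
  simp only [SI, Equiv.Perm.mul_apply, W_apply, CY_apply, cfun]
  split_ifs <;> omega

lemma range'_SI_prod : ∀ (len p : ℕ), ((List.range' p (len + 1)).map SI).prod = CY p (p + len) := by
  intro len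
  induction len with
  | zero => intro p; simp [CY_self]
  | succ len ih =>
      intro p
      rw [List.range'_succ]
      simp only [List.map_cons, List.prod_cons]
      rw [ih (p + 1), show p + 1 + len = p + (len + 1) by omega]
      exact SI_mul_CY p len

lemma CY_mul_W (p q : ℕ) (hpq : p ≤ q) : CY p q * W p q = W (p + 1) (q + 1) * CY p q := by
  ext x
  simp only [Equiv.Perm.mul_apply, W_apply, CY_apply, cfun]
  split_ifs <;> omega

/-! ### Images of intervals -/

lemma perm_image_mul (u v : Equiv.Perm ℕ) (S : Set ℕ) :
    ((u * v : Equiv.Perm ℕ) : ℕ → ℕ) '' S = (u : ℕ → ℕ) '' ((v : ℕ → ℕ) '' S) := by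
  rw [← Set.image_comp]; rfl

lemma mem_image_perm {e : Equiv.Perm ℕ} {S : Set ℕ} {x : ℕ} :
    x ∈ (e : ℕ → ℕ) '' S ↔ e.symm x ∈ S := by
  constructor
  · rintro ⟨y, hy, rfl⟩; simpa using hy
  · intro h; exact ⟨e.symm x, h, by simp⟩

lemma W_image_self (p q : ℕ) : (W p q : ℕ → ℕ) '' Set.Icc p q = Set.Icc p q := by
  ext x
  rw [mem_image_perm, W_symm]
  simp only [Set.mem_Icc, W_apply]
  split_ifs <;> omega

lemma W_image_disjoint (p q m k : ℕ) (h : k < p ∨ q < m) :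
    (W p q : ℕ → ℕ) '' Set.Icc m k = Set.Icc m k := by
  ext x
  rw [mem_image_perm, W_symm]
  simp only [Set.mem_Icc, W_apply]
  split_ifs <;> omega

lemma W_image_nested (p q m k : ℕ) (hpm : p ≤ m) (hmk : m ≤ k) (hkq : k ≤ q) :
    (W p q : ℕ → ℕ) '' Set.Icc m k = Set.Icc (p + q - k) (p + q - m) := by
  ext x
  rw [mem_image_perm, W_symm]
  simp only [Set.mem_Icc, W_apply]
  split_ifs <;> omega

lemma W_image_sup (p q m k : ℕ) (hmp : m ≤ p) (hqk : q ≤ k) :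
    (W p q : ℕ → ℕ) '' Set.Icc m k = Set.Icc m k := by
  ext x
  rw [mem_image_perm, W_symm]
  simp only [Set.mem_Icc, W_apply]
  split_ifs <;> omega

lemma CY_image (p q : ℕ) (hpq : p ≤ q) :
    (CY p q : ℕ → ℕ) '' Set.Icc p q = Set.Icc (p + 1) (q + 1) := by
  ext x
  rw [mem_image_perm]
  simp only [Set.mem_Icc, CY_symm_apply, cgun]
  split_ifs <;> omega

/-! ### Images and the relation `Rr` -/

lemma Rr_image_iff {e : Equiv.Perm ℕ} {A B : Set ℕ} :
    Rr ((e : ℕ → ℕ) '' A) ((e : ℕ → ℕ) '' B) ↔ Rr A B := by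
  have hinj : Function.Injective (e : ℕ → ℕ) := e.injective
  unfold Rr
  rw [← Set.image_inter hinj]
  constructor
  · rintro (h | h | h)
    · left
      have : (e : ℕ → ℕ) '' (A ∩ B) = (e : ℕ → ℕ) '' ∅ := by simpa using h
      exact (Set.image_eq_image hinj).mp this
    · right; left
      rw [Set.ssubset_def] at h ⊢
      rw [Set.image_subset_image_iff hinj, Set.image_subset_image_iff hinj] at h
      exact h
    · right; right
      rw [Set.ssubset_def] at h ⊢
      rw [Set.image_subset_image_iff hinj, Set.image_subset_image_iff hinj] at h
      exact h
  · rintro (h | h | h)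
    · left; rw [h]; simp
    · right; left
      rw [Set.ssubset_def] at h ⊢
      rw [Set.image_subset_image_iff hinj, Set.image_subset_image_iff hinj]
      exact h
    · right; right
      rw [Set.ssubset_def] at h ⊢
      rw [Set.image_subset_image_iff hinj, Set.image_subset_image_iff hinj]
      exact h

lemma image_nonempty {e : Equiv.Perm ℕ} {A : Set ℕ} (hA : A.Nonempty) :
    ((e : ℕ → ℕ) '' A).Nonempty := hA.image _

end
end CactusTrace

namespace CactusTrace
noncomputable section
open Classical List Relation

variable {n : ℕ}

/-! ### The homomorphism `ι : J_n → VJ_n` -/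

lemma map_inl_XJ (n p q : ℕ) : FreeGroup.map Sum.inl (XJ n p q) = XV n p q := by
  by_cases h : 1 ≤ p ∧ p < q ∧ q ≤ n
  · rw [XJ, dif_pos h, XV, dif_pos h]; exact FreeGroup.map.of
  · rw [XJ, dif_neg h, XV, dif_neg h, map_one]; rfl

lemma JRels_map {r : FreeGroup (JIdx n)} (hr : r ∈ JRels n) :
    FreeGroup.map Sum.inl r ∈ VJRels n := by
  rcases hr with (⟨p, q, h1, rfl⟩ | ⟨p, q, m, k, h1, h2, h3, rfl⟩) | ⟨p, q, m, k, h1, h2, h3, rfl⟩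
  · exact Or.inl <| Or.inl <| Or.inl <| Or.inl <| Or.inl <| Or.inl <| Or.inl
      ⟨p, q, h1, by simp [map_inl_XJ]; rfl⟩
  · exact Or.inl <| Or.inl <| Or.inl <| Or.inl <| Or.inl <| Or.inl <| Or.inr
      ⟨p, q, m, k, h1, h2, h3, by simp [map_inl_XJ]; rfl⟩
  · exact Or.inl <| Or.inl <| Or.inl <| Or.inl <| Or.inl <| Or.inr
      ⟨p, q, m, k, h1, h2, h3, by simp [map_inl_XJ]; rfl⟩

lemma iota_rels (n : ℕ) : ∀ r ∈ JRels n,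
    FreeGroup.lift (fun a : JIdx n => (PresentedGroup.of (Sum.inl a) : VJGroup n)) r = 1 := by
  intro r hr
  have hcomp : FreeGroup.lift (fun a : JIdx n => (PresentedGroup.of (Sum.inl a) : VJGroup n)) =
      (PresentedGroup.mk (VJRels n)).comp (FreeGroup.map Sum.inl) := by
    apply FreeGroup.ext_hom
    intro a
    simp only [FreeGroup.lift_apply_of, MonoidHom.comp_apply, FreeGroup.map.of]
    rfl
  rw [hcomp, MonoidHom.comp_apply]
  exact (QuotientGroup.eq_one_iff _).mpr (Subgroup.subset_normalClosure (JRels_map hr))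

/-- The canonical homomorphism `J_n → VJ_n`. -/
def iotaJ (n : ℕ) : JGroup n →* VJGroup n := PresentedGroup.toGroup (iota_rels n)

lemma iotaJ_of (a : JIdx n) : iotaJ n (PresentedGroup.of a) = PresentedGroup.of (Sum.inl a) :=
  PresentedGroup.toGroup.of (iota_rels n)

/-! ### Relations in `J_n` -/

lemma relJ {r : FreeGroup (JIdx n)} (hr : r ∈ JRels n) :
    PresentedGroup.mk (JRels n) r = 1 :=
  (QuotientGroup.eq_one_iff _).mpr (Subgroup.subset_normalClosure hr)

lemma mk_XJ {p q : ℕ} (h : 1 ≤ p ∧ p < q ∧ q ≤ n) :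
    PresentedGroup.mk (JRels n) (XJ n p q) = PresentedGroup.of (⟨(p, q), h⟩ : JIdx n) := by
  rw [XJ, dif_pos h]; rfl

lemma ofJ_sq (a : JIdx n) : (PresentedGroup.of a : JGroup n) * PresentedGroup.of a = 1 := by
  obtain ⟨⟨p, q⟩, h⟩ := a
  have := relJ (n := n) (Or.inl (Or.inl ⟨p, q, h, rfl⟩))
  rw [map_pow, mk_XJ h] at this
  exact (pow_two _).symm.trans this

lemma ofJ_comm {p q m k : ℕ} (h1 : 1 ≤ p ∧ p < q ∧ q ≤ n) (h2 : 1 ≤ m ∧ m < k ∧ k ≤ n)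
    (h3 : q < m ∨ k < p) :
    (PresentedGroup.of (⟨(p, q), h1⟩ : JIdx n) : JGroup n) * PresentedGroup.of ⟨(m, k), h2⟩ =
      PresentedGroup.of ⟨(m, k), h2⟩ * PresentedGroup.of ⟨(p, q), h1⟩ := by
  have := relJ (n := n) (Or.inl (Or.inr ⟨p, q, m, k, h1, h2, h3, rfl⟩))
  rw [map_mul, map_mul, map_inv, map_mul, mk_XJ h1, mk_XJ h2] at this
  rw [mul_inv_eq_one] at this
  exact this

lemma ofJ_nest {p q m k : ℕ} (h1 : 1 ≤ p ∧ p < q ∧ q ≤ n) (h2 : 1 ≤ m ∧ m < k ∧ k ≤ n)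
    (h3 : p ≤ m ∧ k ≤ q) (h4 : 1 ≤ p + q - k ∧ p + q - k < p + q - m ∧ p + q - m ≤ n) :
    (PresentedGroup.of (⟨(p, q), h1⟩ : JIdx n) : JGroup n) * PresentedGroup.of ⟨(m, k), h2⟩ =
      PresentedGroup.of ⟨(p + q - k, p + q - m), h4⟩ * PresentedGroup.of ⟨(p, q), h1⟩ := by
  have := relJ (n := n) (Or.inr ⟨p, q, m, k, h1, h2, h3, rfl⟩)
  rw [map_mul, map_mul, map_inv, map_mul, mk_XJ h1, mk_XJ h2, mk_XJ h4] at this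
  rw [mul_inv_eq_one] at this
  exact this

/-- Derived form: `x_{mk} x_{pq} = x_{pq} x_{m'k'}` for `[m,k] ⊆ [p,q]`. -/
lemma ofJ_nest' {p q m k : ℕ} (h1 : 1 ≤ p ∧ p < q ∧ q ≤ n) (h2 : 1 ≤ m ∧ m < k ∧ k ≤ n)
    (h3 : p ≤ m ∧ k ≤ q) (h4 : 1 ≤ p + q - k ∧ p + q - k < p + q - m ∧ p + q - m ≤ n) :
    (PresentedGroup.of (⟨(m, k), h2⟩ : JIdx n) : JGroup n) * PresentedGroup.of ⟨(p, q), h1⟩ =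
      PresentedGroup.of ⟨(p, q), h1⟩ * PresentedGroup.of ⟨(p + q - k, p + q - m), h4⟩ := by
  have h := ofJ_nest h1 h2 h3 h4
  have key : ∀ (x y z : JGroup n), x * x = 1 → x * y = z * x → y * x = x * z := by
    intro x y z hx hxy
    calc y * x = (x * x) * y * x := by rw [hx, one_mul]
      _ = x * (x * y) * x := by group
      _ = x * z * (x * x) := by rw [hxy]; group
      _ = x * z := by rw [hx, mul_one]
  exact key _ _ _ (ofJ_sq _) h

end
end CactusTrace

namespace CactusTrace
noncomputable section
open Classical List Relation

variable {n : ℕ}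

/-! ### The action of `VJ_n` -/

/-- The state space: a permutation together with a reduced trace. -/
abbrev XT : Type := Equiv.Perm ℕ × X

/-- Permutation of states acting on the first coordinate by right translation. -/
def permFst (e : Equiv.Perm ℕ) : Equiv.Perm XT := (Equiv.mulRight e).prodCongr (Equiv.refl X)

lemma permFst_apply (e : Equiv.Perm ℕ) (s : XT) : permFst e s = (s.1 * e, s.2) := rfl

lemma permFst_mul (e f : Equiv.Perm ℕ) : permFst e * permFst f = permFst (f * e) := by
  ext s
  · simp [permFst_apply, Equiv.Perm.mul_apply, mul_assoc]
  · rfl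

lemma permFst_one : permFst 1 = 1 := by
  ext s
  · simp [permFst_apply]
  · rfl

lemma TX_congr {A B : Set ℕ} (h : A = B) (hA : A.Nonempty) (hB : B.Nonempty) :
    TX A hA = TX B hB := by subst h; rfl

lemma intvl_nonempty (a : JIdx n) : (Set.Icc a.1.1 a.1.2).Nonempty :=
  Set.nonempty_Icc.mpr (le_of_lt a.2.2.1)

def EXval (a : JIdx n) : XT → XT := fun s =>
  (s.1 * W a.1.1 a.1.2,
    TX ((s.1 : ℕ → ℕ) '' Set.Icc a.1.1 a.1.2) (image_nonempty (intvl_nonempty a)) s.2)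

lemma EXval_invol (a : JIdx n) : Function.Involutive (EXval a) := by
  intro s
  obtain ⟨u, y⟩ := s
  simp only [EXval]
  have h1 : u * W a.1.1 a.1.2 * W a.1.1 a.1.2 = u := by
    rw [mul_assoc, W_sq, mul_one]
  have h2 : ((u * W a.1.1 a.1.2 : Equiv.Perm ℕ) : ℕ → ℕ) '' Set.Icc a.1.1 a.1.2 =
      (u : ℕ → ℕ) '' Set.Icc a.1.1 a.1.2 := by
    rw [perm_image_mul, W_image_self]
  refine Prod.ext h1 ?_
  show TX (((u * W a.1.1 a.1.2 : Equiv.Perm ℕ) : ℕ → ℕ) '' Set.Icc a.1.1 a.1.2)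
      (image_nonempty (intvl_nonempty a))
      (TX ((u : ℕ → ℕ) '' Set.Icc a.1.1 a.1.2) (image_nonempty (intvl_nonempty a)) y) = y
  rw [TX_congr h2 (image_nonempty (intvl_nonempty a)) (image_nonempty (intvl_nonempty a))]
  exact TXf_invol ((u : ℕ → ℕ) '' Set.Icc a.1.1 a.1.2) (image_nonempty (intvl_nonempty a)) y

/-- The action of the generator `x_{p,q}`. -/
def EX (a : JIdx n) : Equiv.Perm XT := Function.Involutive.toPerm _ (EXval_invol a)

lemma EX_apply (a : JIdx n) (s : XT) : EX a s = EXval a s := rfl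

lemma EX_sq (a : JIdx n) : EX a * EX a = 1 := by
  ext s : 1
  exact EXval_invol a s

/-- The images of the generators of `VJ_n`. -/
def phiGen : VJGen n → Equiv.Perm XT := Sum.elim EX (fun i => permFst (SI i.1))

lemma liftXV {p q : ℕ} (h : 1 ≤ p ∧ p < q ∧ q ≤ n) :
    FreeGroup.lift (phiGen (n := n)) (XV n p q) = EX ⟨(p, q), h⟩ := by
  rw [XV, dif_pos h]; exact FreeGroup.lift_apply_of

lemma liftRV {i : ℕ} (h : 1 ≤ i ∧ i + 1 ≤ n) :
    FreeGroup.lift (phiGen (n := n)) (RV n i) = permFst (SI i) := by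
  rw [RV, dif_pos h]; exact FreeGroup.lift_apply_of

lemma rev_perm_prod : ∀ l : List ℕ,
    ((l.reverse.map (fun i => permFst (SI i))).prod : Equiv.Perm XT) =
      permFst ((l.map SI).prod) := by
  intro l
  induction l with
  | nil => simpa using permFst_one.symm
  | cons i t ih =>
      simp only [List.reverse_cons, List.map_append, List.prod_append, List.map_cons,
        List.prod_cons, List.map_nil, List.prod_nil, mul_one, ih]
      rw [permFst_mul]

lemma liftRho {p q : ℕ} (hp : 1 ≤ p) (hpq : p < q) (hq : q < n) :
    FreeGroup.lift (phiGen (n := n)) (rhoDesc n p q) = permFst (CY p q) := by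
  rw [rhoDesc, map_list_prod, List.map_map]
  have h1 : (List.range' p (q + 1 - p)).reverse.map (FreeGroup.lift (phiGen (n := n)) ∘ RV n) =
      (List.range' p (q + 1 - p)).reverse.map (fun i => permFst (SI i)) := by
    apply List.map_congr_left
    intro i hi
    rw [List.mem_reverse, List.mem_range'] at hi
    have hv : 1 ≤ i ∧ i + 1 ≤ n := by omega
    exact liftRV hv
  rw [h1, rev_perm_prod]
  congr 1
  have h2 : q + 1 - p = (q - p) + 1 := by omega
  rw [h2, range'_SI_prod (q - p) p]
  congr 1
  omega

end
end CactusTrace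

namespace CactusTrace
noncomputable section
open Classical List Relation

variable {n : ℕ}

lemma TX_comm_apply {A B : Set ℕ} (hA : A.Nonempty) (hB : B.Nonempty) (hAB : Rr A B) (y : X) :
    TX A hA (TX B hB y) = TX B hB (TX A hA y) := by
  have h := TX_comm hA hB hAB
  rw [Equiv.ext_iff] at h
  simpa [Equiv.Perm.mul_apply] using h y

lemma Rr_Icc_disjoint {p q m k : ℕ} (h : q < m ∨ k < p) :
    Rr (Set.Icc p q) (Set.Icc m k) := by
  left
  ext x
  simp only [Set.mem_inter_iff, Set.mem_Icc, Set.mem_empty_iff_false, iff_false, not_and]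
  omega

lemma Rr_Icc_nested {p q m k : ℕ} (hpq : p < q) (hmk : m < k) (hpm : p ≤ m) (hkq : k ≤ q)
    (hne : ¬(m = p ∧ k = q)) : Rr (Set.Icc p q) (Set.Icc m k) := by
  right; right
  constructor
  · exact Set.Icc_subset_Icc hpm hkq
  · intro hcon
    have h1 : p ∈ Set.Icc m k := hcon ⟨le_refl p, le_of_lt hpq⟩
    have h2 : q ∈ Set.Icc m k := hcon ⟨le_of_lt hpq, le_refl q⟩
    simp only [Set.mem_Icc] at h1 h2
    omega

set_option maxHeartbeats 1000000 in
lemma Lambda_rels (n : ℕ) : ∀ r ∈ VJRels n, FreeGroup.lift (phiGen (n := n)) r = 1 := by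
  intro r hr
  rcases hr with (((((((⟨p, q, h1, rfl⟩ | ⟨p, q, m, k, h1, h2, h3, rfl⟩) |
    ⟨p, q, m, k, h1, h2, h3, rfl⟩) | ⟨i, h1, rfl⟩) | ⟨i, j, h1, h2, h3, rfl⟩) |
    ⟨i, j, h1, h2, h3, rfl⟩) | ⟨i, p, q, h1, h2, h3, rfl⟩) | ⟨p, q, h1, rfl⟩)
  · -- (j1)
    rw [map_pow, liftXV h1, pow_two]; exact EX_sq _
  · -- (j2)
    simp only [map_mul, map_inv]
    rw [liftXV h1, liftXV h2, mul_inv_eq_one]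
    apply Equiv.ext
    rintro ⟨u, y⟩
    have e1 : ((u * W m k : Equiv.Perm ℕ) : ℕ → ℕ) '' Set.Icc p q =
        (u : ℕ → ℕ) '' Set.Icc p q := by
      rw [perm_image_mul, W_image_disjoint m k p q (by omega)]
    have e2 : ((u * W p q : Equiv.Perm ℕ) : ℕ → ℕ) '' Set.Icc m k =
        (u : ℕ → ℕ) '' Set.Icc m k := by
      rw [perm_image_mul, W_image_disjoint p q m k (by omega)]
    refine Prod.ext ?_ ?_
    · show u * W m k * W p q = u * W p q * W m k
      rw [mul_assoc, mul_assoc, W_comm p q m k h3]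
    · show TX (((u * W m k : Equiv.Perm ℕ) : ℕ → ℕ) '' Set.Icc p q)
          (image_nonempty (intvl_nonempty ⟨(p, q), h1⟩))
          (TX ((u : ℕ → ℕ) '' Set.Icc m k) (image_nonempty (intvl_nonempty ⟨(m, k), h2⟩)) y) =
        TX (((u * W p q : Equiv.Perm ℕ) : ℕ → ℕ) '' Set.Icc m k)
          (image_nonempty (intvl_nonempty ⟨(m, k), h2⟩))
          (TX ((u : ℕ → ℕ) '' Set.Icc p q) (image_nonempty (intvl_nonempty ⟨(p, q), h1⟩)) y)
      rw [TX_congr e1 (image_nonempty (intvl_nonempty ⟨(p, q), h1⟩))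
        (image_nonempty (intvl_nonempty ⟨(p, q), h1⟩)),
        TX_congr e2 (image_nonempty (intvl_nonempty ⟨(m, k), h2⟩))
        (image_nonempty (intvl_nonempty ⟨(m, k), h2⟩))]
      exact TX_comm_apply _ _ (Rr_image_iff.mpr (Rr_Icc_disjoint h3)) y
  · -- (j3)
    have h4 : 1 ≤ p + q - k ∧ p + q - k < p + q - m ∧ p + q - m ≤ n := by omega
    simp only [map_mul, map_inv]
    rw [liftXV h1, liftXV h2, liftXV h4, mul_inv_eq_one]
    apply Equiv.ext
    rintro ⟨u, y⟩
    have e1 : ((u * W m k : Equiv.Perm ℕ) : ℕ → ℕ) '' Set.Icc p q =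
        (u : ℕ → ℕ) '' Set.Icc p q := by
      rw [perm_image_mul, W_image_sup m k p q h3.1 h3.2]
    have e2 : ((u * W p q : Equiv.Perm ℕ) : ℕ → ℕ) '' Set.Icc (p + q - k) (p + q - m) =
        (u : ℕ → ℕ) '' Set.Icc m k := by
      rw [perm_image_mul, W_image_nested p q (p + q - k) (p + q - m)
        (by omega) (by omega) (by omega)]
      rw [show p + q - (p + q - m) = m by omega, show p + q - (p + q - k) = k by omega]
    refine Prod.ext ?_ ?_
    · show u * W m k * W p q = u * W p q * W (p + q - k) (p + q - m)
      rw [mul_assoc, mul_assoc, W_nested p q m k h3.1 (le_of_lt h2.2.1) h3.2]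
    · show TX (((u * W m k : Equiv.Perm ℕ) : ℕ → ℕ) '' Set.Icc p q)
          (image_nonempty (intvl_nonempty ⟨(p, q), h1⟩))
          (TX ((u : ℕ → ℕ) '' Set.Icc m k) (image_nonempty (intvl_nonempty ⟨(m, k), h2⟩)) y) =
        TX (((u * W p q : Equiv.Perm ℕ) : ℕ → ℕ) '' Set.Icc (p + q - k) (p + q - m))
          (image_nonempty (intvl_nonempty ⟨(p + q - k, p + q - m), h4⟩))
          (TX ((u : ℕ → ℕ) '' Set.Icc p q) (image_nonempty (intvl_nonempty ⟨(p, q), h1⟩)) y)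
      rw [TX_congr e1 (image_nonempty (intvl_nonempty ⟨(p, q), h1⟩))
        (image_nonempty (intvl_nonempty ⟨(p, q), h1⟩)),
        TX_congr e2 (image_nonempty (intvl_nonempty ⟨(p + q - k, p + q - m), h4⟩))
        (image_nonempty (intvl_nonempty ⟨(m, k), h2⟩))]
      by_cases heq : m = p ∧ k = q
      · obtain ⟨rfl, rfl⟩ := heq
        rfl
      · exact TX_comm_apply _ _
          (Rr_image_iff.mpr (Rr_Icc_nested h1.2.1 h2.2.1 h3.1 h3.2 heq)) y
  · -- (s1)
    rw [map_pow, liftRV h1, pow_two, permFst_mul,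
      show SI i * SI i = 1 from W_sq i (i + 1), permFst_one]
  · -- (s2)
    simp only [map_mul, map_inv]
    rw [liftRV h1, liftRV h2, mul_inv_eq_one, permFst_mul, permFst_mul, permFst_mul, permFst_mul]
    congr 1
    rcases h3 with rfl | rfl
    · simp only [← mul_assoc]
      exact SI_braid i
    · simp only [← mul_assoc]
      exact (SI_braid j).symm
  · -- (s3)
    simp only [map_mul, map_inv]
    rw [liftRV h1, liftRV h2, mul_inv_eq_one, permFst_mul, permFst_mul]
    congr 1
    exact W_comm j (j + 1) i (i + 1) (by omega)
  · -- (m1)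
    simp only [map_mul, map_inv]
    rw [liftRV h1, liftXV h2, mul_inv_eq_one]
    apply Equiv.ext
    rintro ⟨u, y⟩
    have e1 : ((u * SI i : Equiv.Perm ℕ) : ℕ → ℕ) '' Set.Icc p q =
        (u : ℕ → ℕ) '' Set.Icc p q := by
      rw [perm_image_mul, SI, W_image_disjoint i (i + 1) p q (by omega)]
    refine Prod.ext ?_ ?_
    · show u * W p q * SI i = u * SI i * W p q
      rw [mul_assoc, mul_assoc, SI, W_comm i (i + 1) p q (by omega)]
    · show TX ((u : ℕ → ℕ) '' Set.Icc p q) (image_nonempty (intvl_nonempty ⟨(p, q), h2⟩)) y =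
        TX (((u * SI i : Equiv.Perm ℕ) : ℕ → ℕ) '' Set.Icc p q)
          (image_nonempty (intvl_nonempty ⟨(p, q), h2⟩)) y
      rw [TX_congr e1 (image_nonempty (intvl_nonempty ⟨(p, q), h2⟩))
        (image_nonempty (intvl_nonempty ⟨(p, q), h2⟩))]
  · -- (m2)
    have h2 : 1 ≤ p + 1 ∧ p + 1 < q + 1 ∧ q + 1 ≤ n := by omega
    have h1' : 1 ≤ p ∧ p < q ∧ q ≤ n := by omega
    simp only [map_mul, map_inv]
    rw [liftXV h1', liftRho h1.1 h1.2.1 h1.2.2, liftXV h2, mul_inv_eq_one]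
    apply Equiv.ext
    rintro ⟨u, y⟩
    have e1 : ((u * CY p q : Equiv.Perm ℕ) : ℕ → ℕ) '' Set.Icc p q =
        (u : ℕ → ℕ) '' Set.Icc (p + 1) (q + 1) := by
      rw [perm_image_mul, CY_image p q (by omega)]
    refine Prod.ext ?_ ?_
    · show u * CY p q * W p q = u * W (p + 1) (q + 1) * CY p q
      rw [mul_assoc, mul_assoc, CY_mul_W p q (by omega)]
    · show TX (((u * CY p q : Equiv.Perm ℕ) : ℕ → ℕ) '' Set.Icc p q)
          (image_nonempty (intvl_nonempty ⟨(p, q), h1'⟩)) y =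
        TX ((u : ℕ → ℕ) '' Set.Icc (p + 1) (q + 1))
          (image_nonempty (intvl_nonempty ⟨(p + 1, q + 1), h2⟩)) y
      rw [TX_congr e1 (image_nonempty (intvl_nonempty ⟨(p, q), h1'⟩))
        (image_nonempty (intvl_nonempty ⟨(p + 1, q + 1), h2⟩))]

/-- The action homomorphism `VJ_n → Perm(XT)`. -/
def Lambda (n : ℕ) : VJGroup n →* Equiv.Perm XT := PresentedGroup.toGroup (Lambda_rels n)

lemma Lambda_of_inl (a : JIdx n) :
    Lambda n (PresentedGroup.of (Sum.inl a)) = EX a :=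
  PresentedGroup.toGroup.of (Lambda_rels n)

end
end CactusTrace

namespace CactusTrace
noncomputable section
open Classical List Relation

variable {n : ℕ}

/-! ### Words in the cactus group and the state model -/

def Wa (a : JIdx n) : Equiv.Perm ℕ := W a.1.1 a.1.2

def Ia (a : JIdx n) : Set ℕ := Set.Icc a.1.1 a.1.2

/-- Product of the letters of `l` in reverse order. -/
def prodJr (l : List (JIdx n)) : JGroup n :=
  ((l.reverse).map PresentedGroup.of).prod

lemma prodJr_nil : prodJr ([] : List (JIdx n)) = 1 := rfl

lemma prodJr_append (x y : List (JIdx n)) : prodJr (x ++ y) = prodJr y * prodJr x := by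
  simp [prodJr, List.reverse_append]

lemma prodJr_snoc (x : List (JIdx n)) (a : JIdx n) :
    prodJr (x ++ [a]) = PresentedGroup.of a * prodJr x := by
  simp [prodJr, List.reverse_append]

lemma prodJr_cons (a : JIdx n) (x : List (JIdx n)) :
    prodJr (a :: x) = prodJr x * PresentedGroup.of a := by
  simp [prodJr]

lemma exists_list (g : JGroup n) : ∃ l : List (JIdx n), g = prodJr l := by
  obtain ⟨z, rfl⟩ := PresentedGroup.mk_surjective (JRels n) g
  · induction z using FreeGroup.induction_on with
    | C1 => exact ⟨[], by simp [prodJr]⟩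
    | of x => exact ⟨[x], by simp [prodJr_cons, prodJr_nil]; rfl⟩
    | inv_of x _ =>
        refine ⟨[x], ?_⟩
        have h1 : (PresentedGroup.mk (JRels n)) ((FreeGroup.of x : FreeGroup (JIdx n)))⁻¹ =
            (PresentedGroup.of x : JGroup n)⁻¹ := by
          rw [map_inv]; rfl
        have h2 : (PresentedGroup.of x : JGroup n)⁻¹ = PresentedGroup.of x :=
          inv_eq_of_mul_eq_one_right (ofJ_sq x)
        rw [h1, h2]
        simp [prodJr_cons, prodJr_nil]
    | mul x y hx hy =>
        obtain ⟨lx, hlx⟩ := hx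
        obtain ⟨ly, hly⟩ := hy
        refine ⟨ly ++ lx, ?_⟩
        rw [map_mul, hlx, hly, prodJr_append]

/-- Run a word through the state space. -/
def runT (s : XT) (l : List (JIdx n)) : XT := l.foldl (fun s a => EX a s) s

lemma runT_append (s : XT) (x y : List (JIdx n)) :
    runT s (x ++ y) = runT (runT s x) y := List.foldl_append

lemma Lambda_prodJr (l : List (JIdx n)) (s : XT) :
    Lambda n (iotaJ n (prodJr l)) s = runT s l := by
  induction l using List.reverseRecOn with
  | nil => simp [prodJr_nil, runT]
  | append_singleton x a ih =>
      erw [prodJr_snoc, map_mul, map_mul, iotaJ_of, Lambda_of_inl, runT_append,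
        Equiv.Perm.mul_apply, ih]
      rfl

/-! ### The bookkeeping model -/

def permOf (l : List (JIdx n)) : Equiv.Perm ℕ := (l.map Wa).prod

lemma permOf_nil : permOf ([] : List (JIdx n)) = 1 := rfl

lemma permOf_cons (a : JIdx n) (t : List (JIdx n)) : permOf (a :: t) = Wa a * permOf t := by
  simp [permOf]

lemma permOf_append (x y : List (JIdx n)) : permOf (x ++ y) = permOf x * permOf y := by
  simp [permOf]

/-- The sequence of labels of a word, newest first. -/
def AseqR (u : Equiv.Perm ℕ) : List (JIdx n) → Lst
  | [] => []
  | a :: t => AseqR (u * Wa a) t ++ [(u : ℕ → ℕ) '' Ia a]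

lemma AseqR_nil (u : Equiv.Perm ℕ) : AseqR (n := n) u [] = [] := rfl

lemma AseqR_cons (u : Equiv.Perm ℕ) (a : JIdx n) (t : List (JIdx n)) :
    AseqR u (a :: t) = AseqR (u * Wa a) t ++ [(u : ℕ → ℕ) '' Ia a] := rfl

lemma AseqR_length (u : Equiv.Perm ℕ) : ∀ l : List (JIdx n), (AseqR u l).length = l.length := by
  intro l
  induction l generalizing u with
  | nil => rfl
  | cons a t ih => simp [AseqR, ih]

lemma AseqR_append (x y : List (JIdx n)) : ∀ u : Equiv.Perm ℕ,
    AseqR u (x ++ y) = AseqR (u * permOf x) y ++ AseqR u x := by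
  induction x with
  | nil => intro u; simp [AseqR, permOf_nil]
  | cons a t ih =>
      intro u
      rw [cons_append, AseqR_cons, AseqR_cons, ih (u * Wa a), permOf_cons, ← mul_assoc,
        append_assoc]

/-- Trace evolution. -/
def trOf (u : Equiv.Perm ℕ) : List (JIdx n) → Lst → Lst
  | [], y => y
  | a :: t, y => trOf (u * Wa a) t (TFn ((u : ℕ → ℕ) '' Ia a) y)

/-- "Every step appends". -/
def AllApp (u : Equiv.Perm ℕ) : List (JIdx n) → Lst → Prop
  | [], _ => True
  | a :: t, y => dFn ((u : ℕ → ℕ) '' Ia a) y = none ∧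
      AllApp (u * Wa a) t (TFn ((u : ℕ → ℕ) '' Ia a) y)

lemma trOf_allApp : ∀ (l : List (JIdx n)) (u : Equiv.Perm ℕ) (y : Lst),
    AllApp u l y → trOf u l y = AseqR u l ++ y := by
  intro l
  induction l with
  | nil => intro u y _; rfl
  | cons a t ih =>
      intro u y h
      obtain ⟨h1, h2⟩ := h
      show trOf (u * Wa a) t (TFn ((u : ℕ → ℕ) '' Ia a) y) = _
      rw [ih _ _ h2, TFn, h1, Option.getD_none]
      simp [AseqR]

lemma runT_model : ∀ (l : List (JIdx n)) (u : Equiv.Perm ℕ) (t : X) (y : Lst),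
    t.1 = mkT y →
    (runT (u, t) l).1 = u * permOf l ∧ ((runT (u, t) l).2).1 = mkT (trOf u l y) := by
  intro l
  induction l with
  | nil => intro u t y ht; exact ⟨by simp [runT, permOf_nil], by simpa [runT, trOf] using ht⟩
  | cons a l' ih =>
      intro u t y ht
      have hstep : runT (u, t) (a :: l') = runT (EX a (u, t)) l' := rfl
      have hsnd : ((TXf ((u : ℕ → ℕ) '' Ia a) (image_nonempty (intvl_nonempty a)) t) : X).1 =
          mkT (TFn ((u : ℕ → ℕ) '' Ia a) y) := by
        show TQ ((u : ℕ → ℕ) '' Ia a) (Rr_irrefl (image_nonempty (intvl_nonempty a))) t.1 = _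
        rw [ht, TQ_mk]
      have := ih (u * Wa a) (TXf ((u : ℕ → ℕ) '' Ia a) (image_nonempty (intvl_nonempty a)) t)
        (TFn ((u : ℕ → ℕ) '' Ia a) y) hsnd
      refine ⟨?_, ?_⟩
      · rw [hstep]
        show (runT (EX a (u, t)) l').1 = _
        have h1 : EX a (u, t) =
            (u * Wa a, TXf ((u : ℕ → ℕ) '' Ia a) (image_nonempty (intvl_nonempty a)) t) := rfl
        rw [h1, this.1, permOf_cons, mul_assoc]
      · rw [hstep]
        have h1 : EX a (u, t) =
            (u * Wa a, TXf ((u : ℕ → ℕ) '' Ia a) (image_nonempty (intvl_nonempty a)) t) := rfl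
        rw [h1, this.2]
        rfl

lemma allApp_or_split : ∀ (l : List (JIdx n)) (u : Equiv.Perm ℕ) (y : Lst),
    AllApp u l y ∨ ∃ l₁ a l₂, l = l₁ ++ a :: l₂ ∧ AllApp u l₁ y ∧
      dFn (((u * permOf l₁ : Equiv.Perm ℕ) : ℕ → ℕ) '' Ia a) (trOf u l₁ y) ≠ none := by
  intro l
  induction l with
  | nil => intro u y; exact Or.inl trivial
  | cons a t ih =>
      intro u y
      by_cases hd : dFn ((u : ℕ → ℕ) '' Ia a) y = none
      · rcases ih (u * Wa a) (TFn ((u : ℕ → ℕ) '' Ia a) y) with h | ⟨l₁, b, l₂, h1, h2, h3⟩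
        · exact Or.inl ⟨hd, h⟩
        · refine Or.inr ⟨a :: l₁, b, l₂, by rw [h1, cons_append], ⟨hd, h2⟩, ?_⟩
          have e1 : u * permOf (a :: l₁) = u * Wa a * permOf l₁ := by
            rw [permOf_cons, mul_assoc]
          rw [e1]
          exact h3
      · refine Or.inr ⟨[], a, t, rfl, trivial, ?_⟩
        rw [permOf_nil, mul_one]
        exact hd

end
end CactusTrace

namespace CactusTrace
noncomputable section
open Classical List Relation

variable {n : ℕ}

/-! ### Arithmetic of intervals -/

lemma Icc_disj_numeric {p q m k : ℕ} (hpq : p ≤ q) (hmk : m ≤ k)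
    (h : Set.Icc p q ∩ Set.Icc m k = (∅ : Set ℕ)) : k < p ∨ q < m := by
  by_contra hcon
  push_neg at hcon
  have h1 := Set.ext_iff.mp h (max p m)
  simp only [Set.mem_inter_iff, Set.mem_Icc, Set.mem_empty_iff_false, iff_false, not_and,
    le_max_iff, max_le_iff] at h1
  omega

lemma Icc_sub_numeric {p q m k : ℕ} (hmk : m ≤ k) (h : Set.Icc m k ⊆ Set.Icc p q) :
    p ≤ m ∧ k ≤ q := by
  have h1 := h (Set.mem_Icc.mpr ⟨le_refl m, hmk⟩)
  have h2 := h (Set.mem_Icc.mpr ⟨hmk, le_refl k⟩)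
  simp only [Set.mem_Icc] at h1 h2
  omega

lemma Icc_inj_nat {p q m k : ℕ} (hpq : p ≤ q) (hmk : m ≤ k)
    (h : Set.Icc p q = Set.Icc m k) : p = m ∧ q = k := by
  have h1 := Icc_sub_numeric hmk h.symm.subset
  have h2 := Icc_sub_numeric hpq h.subset
  omega

lemma Rr_Icc_cases {p q m k : ℕ} (hpq : p ≤ q) (hmk : m ≤ k)
    (h : Rr (Set.Icc p q) (Set.Icc m k)) :
    (k < p ∨ q < m) ∨ (p ≤ m ∧ k ≤ q ∧ ¬(m = p ∧ k = q)) ∨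
      (m ≤ p ∧ q ≤ k ∧ ¬(m = p ∧ k = q)) := by
  rcases h with h | h | h
  · exact Or.inl (Icc_disj_numeric hpq hmk h)
  · -- Icc p q ⊂ Icc m k
    right; right
    have h1 := Icc_sub_numeric hpq h.subset
    refine ⟨h1.1, h1.2, ?_⟩
    rintro ⟨rfl, rfl⟩
    exact h.2 (le_refl _)
  · right; left
    have h1 := Icc_sub_numeric hmk h.subset
    refine ⟨h1.1, h1.2, ?_⟩
    rintro ⟨rfl, rfl⟩
    exact h.2 (le_refl _)

lemma JIdx_ext {a b : JIdx n} (h : Ia a = Ia b) : a = b := by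
  obtain ⟨⟨p, q⟩, ha⟩ := a
  obtain ⟨⟨m, k⟩, hb⟩ := b
  have h2 := Icc_inj_nat (le_of_lt ha.2.1) (le_of_lt hb.2.1) h
  apply Subtype.ext
  exact Prod.ext h2.1 h2.2

/-! ### The adjacent swap lemma -/

lemma swap_adj {p q m k : ℕ} (hb : 1 ≤ p ∧ p < q ∧ q ≤ n) (ha : 1 ≤ m ∧ m < k ∧ k ≤ n)
    (u : Equiv.Perm ℕ)
    (hR : Rr ((u : ℕ → ℕ) '' Set.Icc p q)
      (((u * W p q : Equiv.Perm ℕ) : ℕ → ℕ) '' Set.Icc m k)) :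
    ∃ a' b' : JIdx n,
      (PresentedGroup.of (⟨(m, k), ha⟩ : JIdx n) : JGroup n) * PresentedGroup.of ⟨(p, q), hb⟩ =
        PresentedGroup.of b' * PresentedGroup.of a' ∧
      (u : ℕ → ℕ) '' Ia a' = ((u * W p q : Equiv.Perm ℕ) : ℕ → ℕ) '' Set.Icc m k := by
  have hIm : ((u * W p q : Equiv.Perm ℕ) : ℕ → ℕ) '' Set.Icc m k =
      (u : ℕ → ℕ) '' ((W p q : ℕ → ℕ) '' Set.Icc m k) := perm_image_mul u (W p q) _
  have hR2 : Rr (Set.Icc p q) ((W p q : ℕ → ℕ) '' Set.Icc m k) := by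
    rw [hIm] at hR
    exact Rr_image_iff.mp hR
  have hR3 : Rr (Set.Icc p q) (Set.Icc m k) := by
    rw [← W_image_self p q] at hR2
    exact Rr_image_iff.mp hR2
  rcases Rr_Icc_cases (le_of_lt hb.2.1) (le_of_lt ha.2.1) hR3 with hc | hc | hc
  · refine ⟨⟨(m, k), ha⟩, ⟨(p, q), hb⟩, (ofJ_comm hb ha (by omega)).symm, ?_⟩
    rw [hIm, W_image_disjoint p q m k (by omega)]
    rfl
  · have h4 : 1 ≤ p + q - k ∧ p + q - k < p + q - m ∧ p + q - m ≤ n := by omega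
    refine ⟨⟨(p + q - k, p + q - m), h4⟩, ⟨(p, q), hb⟩,
      ofJ_nest' hb ha ⟨hc.1, hc.2.1⟩ h4, ?_⟩
    rw [hIm, W_image_nested p q m k hc.1 (le_of_lt ha.2.1) hc.2.1]
    rfl
  · have h4 : 1 ≤ m + k - q ∧ m + k - q < m + k - p ∧ m + k - p ≤ n := by omega
    refine ⟨⟨(m, k), ha⟩, ⟨(m + k - q, m + k - p), h4⟩,
      ofJ_nest ha hb ⟨hc.1, hc.2.1⟩ h4, ?_⟩
    rw [hIm, W_image_sup p q m k hc.1 hc.2.1]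
    rfl

lemma permOf_singleton (b : JIdx n) : permOf [b] = Wa b := by simp [permOf]

/-- Moving a letter left through a block of commuting letters. -/
lemma swaps (mid : List (JIdx n)) : ∀ (u : Equiv.Perm ℕ) (a : JIdx n),
    (∀ B ∈ AseqR u mid, Rr (((u * permOf mid : Equiv.Perm ℕ) : ℕ → ℕ) '' Ia a) B) →
    ∃ (a' : JIdx n) (mid' : List (JIdx n)),
      prodJr (mid ++ [a]) = prodJr (a' :: mid') ∧
      (u : ℕ → ℕ) '' Ia a' = ((u * permOf mid : Equiv.Perm ℕ) : ℕ → ℕ) '' Ia a ∧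
      mid'.length = mid.length := by
  induction mid using List.reverseRecOn with
  | nil =>
      intro u a _
      refine ⟨a, [], rfl, ?_, rfl⟩
      rw [permOf_nil, mul_one]
  | append_singleton mid'' b ih =>
      intro u a hyp
      obtain ⟨⟨m, k⟩, ha⟩ := a
      obtain ⟨⟨p, q⟩, hb⟩ := b
      have hWb : Wa (⟨(p, q), hb⟩ : JIdx n) = W p q := rfl
      have hperm : u * permOf (mid'' ++ ([⟨(p, q), hb⟩] : List (JIdx n))) =
          (u * permOf mid'') * W p q := by
        erw [permOf_append, permOf_singleton, hWb, ← mul_assoc]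
      have hA : AseqR u (mid'' ++ ([⟨(p, q), hb⟩] : List (JIdx n))) =
          ((u * permOf mid'' : Equiv.Perm ℕ) : ℕ → ℕ) '' Set.Icc p q :: AseqR u mid'' := by
        erw [AseqR_append, AseqR_cons, AseqR_nil]
        rfl
      have hR : Rr (((u * permOf mid'' : Equiv.Perm ℕ) : ℕ → ℕ) '' Set.Icc p q)
          ((((u * permOf mid'') * W p q : Equiv.Perm ℕ) : ℕ → ℕ) '' Set.Icc m k) := by
        have := hyp _ (by rw [hA]; exact mem_cons_self)
        rw [hperm] at this
        exact this.symm'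
      obtain ⟨a', b', hgrp, hlab⟩ := swap_adj hb ha (u * permOf mid'') hR
      have hyp' : ∀ B ∈ AseqR u mid'',
          Rr (((u * permOf mid'' : Equiv.Perm ℕ) : ℕ → ℕ) '' Ia a') B := by
        intro B hB
        rw [hlab, ← hperm]
        exact hyp B (by rw [hA]; exact mem_cons_of_mem _ hB)
      obtain ⟨astar, midstar, hgrp2, hlab2, hlen2⟩ := ih u a' hyp'
      refine ⟨astar, midstar ++ [b'], ?_, ?_, ?_⟩
      · calc prodJr ((mid'' ++ ([⟨(p, q), hb⟩] : List (JIdx n))) ++ ([⟨(m, k), ha⟩] : List (JIdx n)))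
            = (PresentedGroup.of (⟨(m, k), ha⟩ : JIdx n) : JGroup n) *
              ((PresentedGroup.of (⟨(p, q), hb⟩ : JIdx n) : JGroup n) * prodJr mid'') := by
              exact (prodJr_snoc _ _).trans (congrArg _ (prodJr_snoc _ _))
          _ = (PresentedGroup.of b' * PresentedGroup.of a') * prodJr mid'' := by
              exact (mul_assoc _ _ _).symm.trans (congrArg (· * prodJr mid'') hgrp)
          _ = PresentedGroup.of b' * prodJr (mid'' ++ [a']) := by
              rw [mul_assoc, ← prodJr_snoc]
          _ = PresentedGroup.of b' * prodJr (astar :: midstar) := by rw [hgrp2]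
          _ = prodJr ((astar :: midstar) ++ [b']) := (prodJr_snoc _ _).symm
          _ = prodJr (astar :: (midstar ++ [b'])) := by rw [cons_append]
      · rw [hlab2, hlab, ← hperm]; rfl
      · simp [hlen2]; rfl

end
end CactusTrace

namespace CactusTrace
noncomputable section
open Classical List Relation

variable {n : ℕ}

lemma aseq_split : ∀ (l : List (JIdx n)) (u : Equiv.Perm ℕ) (L₁ L₂ : Lst) (A : Set ℕ),
    AseqR u l = L₁ ++ A :: L₂ →
    ∃ (m₁ : List (JIdx n)) (b : JIdx n) (m₂ : List (JIdx n)), l = m₁ ++ b :: m₂ ∧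
      AseqR (u * permOf (m₁ ++ [b])) m₂ = L₁ ∧
      ((u * permOf m₁ : Equiv.Perm ℕ) : ℕ → ℕ) '' Ia b = A := by
  intro l
  induction l with
  | nil =>
      intro u L₁ L₂ A h
      rw [AseqR_nil] at h
      exact absurd h.symm (by simp)
  | cons c t ih =>
      intro u L₁ L₂ A h
      rw [AseqR_cons] at h
      rcases List.eq_nil_or_concat L₂ with rfl | ⟨L₂', z, rfl⟩
      · have h2 := List.append_inj' h (by simp)
        refine ⟨[], c, t, rfl, ?_, ?_⟩
        · rw [show ([] : List (JIdx n)) ++ [c] = [c] from rfl, permOf_singleton]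
          exact h2.1
        · rw [permOf_nil, mul_one]
          simpa using h2.2
      · rw [List.concat_eq_append] at h
        rw [show L₁ ++ A :: (L₂' ++ [z]) = (L₁ ++ A :: L₂') ++ [z] by simp] at h
        have h2 := List.append_inj' h (by simp)
        obtain ⟨m₁, b, m₂, hsplit, hmid, hlab⟩ := ih (u * Wa c) L₁ L₂' A h2.1
        refine ⟨c :: m₁, b, m₂, by rw [hsplit, cons_append], ?_, ?_⟩
        · rw [show (c :: m₁) ++ [b] = c :: (m₁ ++ [b]) from rfl, permOf_cons, ← mul_assoc]
          exact hmid
        · rw [permOf_cons, ← mul_assoc]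
          exact hlab

/-- The base point of the state space. -/
def sT : XT := (1, x0)

set_option maxHeartbeats 1000000 in
lemma main_lemma : ∀ (N : ℕ) (l : List (JIdx n)), l.length = N →
    runT sT l = sT → prodJr l = 1 := by
  intro N
  induction N using Nat.strong_induction_on with
  | _ N ihN =>
    intro l hlen hrun
    have hx0 : (x0 : X).1 = mkT [] := rfl
    have hmodel := runT_model l 1 x0 [] hx0
    rcases allApp_or_split l 1 [] with hApp | ⟨l₁, a, l₂, rfl, hApp, hdel⟩
    · -- no deletion ever: the trace has the same length as the word
      have htr : mkT ([] : Lst) = mkT (trOf 1 l []) := by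
        have h0 : (runT sT l).2.1 = mkT (trOf 1 l []) := hmodel.2
        rw [hrun] at h0
        exact h0
      have hlen2 := length_eq_of_mkT_eq htr
      rw [trOf_allApp l 1 [] hApp] at hlen2
      simp only [List.length_append, List.length_nil, AseqR_length] at hlen2
      have : l = [] := List.length_eq_zero_iff.mp (by omega)
      rw [this, prodJr_nil]
    · -- first deletion
      have hy₁ : trOf 1 l₁ [] = AseqR 1 l₁ := by
        rw [trOf_allApp l₁ 1 [] hApp, List.append_nil]
      obtain ⟨r, hr⟩ := Option.ne_none_iff_exists'.mp hdel
      rw [hy₁] at hr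
      obtain ⟨L₁, L₂, hs1, _, hs3⟩ := dFn_some_struct hr
      obtain ⟨m₁, b, m₂, hsplit, hmid, hblab⟩ := aseq_split l₁ 1 L₁ L₂ _ hs1
      -- apply the swapping lemma to the segment m₂ ++ [a]
      have hctx : (1 * permOf (m₁ ++ [b])) * permOf m₂ = 1 * permOf l₁ := by
        rw [hsplit, mul_assoc, ← permOf_append, append_assoc]
        rfl
      have hyp : ∀ B ∈ AseqR (1 * permOf (m₁ ++ [b])) m₂,
          Rr ((((1 * permOf (m₁ ++ [b])) * permOf m₂ : Equiv.Perm ℕ) : ℕ → ℕ) '' Ia a) B := by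
        intro B hB
        rw [hctx]
        rw [hmid] at hB
        exact (hs3 B hB).1
      obtain ⟨a', mid', hgrp, hlab', hlen'⟩ := swaps m₂ (1 * permOf (m₁ ++ [b])) a hyp
      -- identify the moved letter with b
      have hab : a' = b := by
        apply JIdx_ext
        have h1 : ((1 * permOf (m₁ ++ [b]) : Equiv.Perm ℕ) : ℕ → ℕ) '' Ia a' =
            ((1 * permOf m₁ : Equiv.Perm ℕ) : ℕ → ℕ) '' Ia b := by
          rw [hlab', hctx, hblab]
        have h2 : 1 * permOf (m₁ ++ [b]) = (1 * permOf m₁) * Wa b := by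
          rw [permOf_append, permOf_singleton, mul_assoc]
        rw [h2, perm_image_mul] at h1
        have h3 := (Set.image_eq_image (Equiv.injective _)).mp h1
        have h4 : (Wa b : ℕ → ℕ) '' Ia b = Ia b := W_image_self b.1.1 b.1.2
        have h5 := congrArg (fun S => (Wa b : ℕ → ℕ) '' S) h3
        rw [← perm_image_mul, h4] at h5
        have h6 : Wa b * Wa b = 1 := W_sq b.1.1 b.1.2
        rw [h6] at h5
        simpa using h5
      -- rewrite the product
      have hl2 : (l₁ ++ a :: l₂ : List (JIdx n)) = m₁ ++ [b] ++ (m₂ ++ [a]) ++ l₂ := by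
        rw [hsplit]
        simp
      have hkey : (prodJr ([a] : List (JIdx n)) * prodJr m₂) * prodJr ([b] : List (JIdx n)) =
          prodJr mid' := by
        have e1 : prodJr ([a] : List (JIdx n)) * prodJr m₂ =
            prodJr mid' * PresentedGroup.of b := by
          rw [← prodJr_append, hgrp, prodJr_cons, hab]
        have e2 : prodJr ([b] : List (JIdx n)) = PresentedGroup.of b := by
          simp [prodJr]
        rw [e1, e2, mul_assoc, ofJ_sq, mul_one]
      have hprod : prodJr (l₁ ++ a :: l₂) = prodJr (m₁ ++ mid' ++ l₂) := by
        rw [hl2]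
        simp only [prodJr_append]
        congr 1
        rw [← mul_assoc, hkey]
      -- conclude by induction
      have hlen'' : (m₁ ++ mid' ++ l₂).length + 2 = N := by
        rw [← hlen, hsplit]
        simp [hlen']
        omega
      have hrun'' : runT sT (m₁ ++ mid' ++ l₂) = sT := by
        have e1 := Lambda_prodJr (m₁ ++ mid' ++ l₂) sT
        have e2 := Lambda_prodJr (l₁ ++ a :: l₂) sT
        rw [← e1, ← hprod, e2, hrun]
      have := ihN ((m₁ ++ mid' ++ l₂).length) (by omega) (m₁ ++ mid' ++ l₂) rfl hrun''
      rw [hprod, this]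

end
end CactusTrace

/-- **Corollary 3.9** (Ilin–Kamnitzer–Li–Przytycki–Rybnikov). For `n ≥ 2`, the natural
homomorphism `ι_J : J_n → VJ_n` from the cactus group to the virtual cactus group, sending
`x_{p,q}` to `x_{p,q}`, is injective. -/
theorem cactus_embeds_in_virtualCactus (n : ℕ) (hn : 2 ≤ n) :
    ∃ f : JGroup n →* VJGroup n,
      (∀ g : JIdx n, f (PresentedGroup.of g) = PresentedGroup.of (Sum.inl g)) ∧
      Function.Injective f := by
  refine ⟨CactusTrace.iotaJ n, fun g => CactusTrace.iotaJ_of g, ?_⟩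
  rw [injective_iff_map_eq_one]
  intro g hg
  obtain ⟨l, rfl⟩ := CactusTrace.exists_list g
  have h1 : CactusTrace.runT CactusTrace.sT l = CactusTrace.sT := by
    rw [← CactusTrace.Lambda_prodJr l CactusTrace.sT, hg, map_one]
    rfl
  exact CactusTrace.main_lemma l.length l rfl h1
end

section
/- Let Γ = (Γ, ≤, μ, (φ_x)_{x∈V(Γ)}) be a trickle graph, let x, y, z ∈ V(Γ) with z ≤ y ≤ x, and let a, b ∈ ℤ. Then (φ_x^a ∘ φ_y^b)(z) = (φ_{φ_x^a(y)}^b ∘ φ_x^a)(z). -/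
open scoped Classical

universe u

namespace SimpleGraph

/-- `y` belongs to the star of `x` in `G` (i.e. `y = x` or `y` is a neighbour of `x`). -/
def InStar {V : Type u} (G : SimpleGraph V) (x y : V) : Prop := y = x ∨ G.Adj x y

end SimpleGraph

/-- A **trickle graph**: a simplicial graph together with a partial order on the vertices,
a vertex labeling `mu` with values in `ℕ≥2 ∪ {∞}`, and, for every vertex `x`, an automorphism
`phi x` of the star of `x` (encoded as a permutation of the whole vertex set fixing every
vertex outside of the star of `x`), subject to conditions (a)–(g) of Bellingeri–Chemin–Paris. -/
structure TrickleGraph (V : Type u) [PartialOrder V] where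
  /-- the underlying simplicial graph -/
  graph : SimpleGraph V
  /-- the vertex labeling, with `⊤` playing the role of `∞` -/
  mu : V → ℕ∞
  /-- the automorphism of the star of each vertex, extended by the identity -/
  phi : V → Equiv.Perm V
  two_le_mu : ∀ x : V, 2 ≤ mu x
  /-- condition (a) -/
  adj_of_lt : ∀ x y : V, x < y → graph.Adj x y
  /-- `phi x` is supported on the star of `x` -/
  phi_apply_of_not_inStar : ∀ x y : V, ¬ graph.InStar x y → phi x y = y
  /-- `phi x` maps the star of `x` to itself -/
  inStar_phi : ∀ x y : V, graph.InStar x y → graph.InStar x (phi x y)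
  /-- `phi x` is a graph automorphism of the (full subgraph spanned by the) star of `x` -/
  adj_phi_iff : ∀ x y z : V, graph.InStar x y → graph.InStar x z →
      (graph.Adj (phi x y) (phi x z) ↔ graph.Adj y z)
  /-- condition (b) -/
  adj_incomp : ∀ x y z : V, graph.Adj x y → ¬ x ≤ y → ¬ y ≤ x → z ≤ y →
      graph.Adj x z ∧ ¬ x ≤ z ∧ ¬ z ≤ x
  /-- condition (c) -/
  le_phi_iff : ∀ x y z : V, graph.InStar x y → graph.InStar x z →
      (phi x z ≤ phi x y ↔ z ≤ y)
  /-- condition (d) -/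
  lt_of_phi_ne : ∀ x y : V, graph.InStar x y → phi x y ≠ y → y < x
  /-- condition (e): if `mu x` is finite then the order of `phi x` divides `mu x` -/
  phi_pow_mu : ∀ x : V, phi x ^ WithTop.untopD 0 (mu x) = 1
  /-- condition (f) -/
  mu_phi : ∀ x y : V, graph.InStar x y → mu (phi x y) = mu y
  /-- condition (g) -/
  phi_phi : ∀ x y z : V, z < y → y < x →
      phi x (phi y z) = phi (phi x y) (phi x z)

namespace TrickleGraph

variable {V : Type u} [PartialOrder V]

/-- The set of defining relators of the trickle group: `x ^ (mu x)` whenever `mu x ≠ ∞`, and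
`phi_x(y) · x · (phi_y(x) · y)⁻¹` for every edge `{x, y}`. -/
def rels (T : TrickleGraph V) : Set (FreeGroup V) :=
  {r | ∃ (x : V) (n : ℕ), T.mu x = (n : ℕ∞) ∧ r = FreeGroup.of x ^ n} ∪
  {r | ∃ x y : V, T.graph.Adj x y ∧
      r = FreeGroup.of (T.phi x y) * FreeGroup.of x *
          (FreeGroup.of (T.phi y x) * FreeGroup.of y)⁻¹}

end TrickleGraph

/-- The **trickle group** of a trickle graph. -/
abbrev TrickleGroup {V : Type u} [PartialOrder V] (T : TrickleGraph V) : Type u :=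
  PresentedGroup T.rels

namespace TrickleGraph

variable {V : Type u} [PartialOrder V]

/-- The image of a vertex in the trickle group. -/
def gen (T : TrickleGraph V) (x : V) : TrickleGroup T := PresentedGroup.of x

/-- `mu` converted to a natural number, with `∞` mapped to `0` (so that `ZMod (T.muNat x)`
is the group `ℤ_{mu x}` of the paper, `ZMod 0 = ℤ` corresponding to `mu x = ∞`). -/
def muNat (T : TrickleGraph V) (x : V) : ℕ := WithTop.untopD 0 (T.mu x)

/-- The power `phi_x^a` for an exponent `a ∈ ℤ_{mu x}`; it is well defined on representatives
by condition (e). -/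
def phiPow (T : TrickleGraph V) (x : V) (a : ZMod (T.muNat x)) : Equiv.Perm V :=
  T.phi x ^ (ZMod.cast a : ℤ)

theorem mu_phi_apply (T : TrickleGraph V) (x y : V) : T.mu (T.phi x y) = T.mu y := by
  by_cases h : T.graph.InStar x y
  · exact T.mu_phi x y h
  · rw [T.phi_apply_of_not_inStar x y h]

theorem mu_phi_zpow (T : TrickleGraph V) (x : V) :
    ∀ (n : ℤ) (y : V), T.mu ((T.phi x ^ n) y) = T.mu y := by
  have hinv : ∀ y : V, T.mu ((T.phi x)⁻¹ y) = T.mu y := by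
    intro y
    conv_rhs => rw [← Equiv.apply_symm_apply (T.phi x) y]
    exact (T.mu_phi_apply x ((T.phi x)⁻¹ y)).symm
  intro n
  induction n using Int.induction_on with
  | zero => intro y; simp
  | succ k ih =>
      intro y
      have h : (T.phi x ^ ((k : ℤ) + 1)) y = (T.phi x ^ (k : ℤ)) (T.phi x y) := by
        rw [zpow_add_one]; rfl
      rw [h, ih (T.phi x y), T.mu_phi_apply]
  | pred k ih =>
      intro y
      have h : (T.phi x ^ (-(k : ℤ) - 1)) y = (T.phi x ^ (-(k : ℤ))) ((T.phi x)⁻¹ y) := by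
        rw [zpow_sub_one]; rfl
      rw [h, ih ((T.phi x)⁻¹ y), hinv]

theorem mu_phiPow (T : TrickleGraph V) (x : V) (a : ZMod (T.muNat x)) (y : V) :
    T.mu ((T.phiPow x a) y) = T.mu y :=
  T.mu_phi_zpow x _ y

theorem muNat_phiPow (T : TrickleGraph V) (x : V) (a : ZMod (T.muNat x)) (y : V) :
    T.muNat ((T.phiPow x a) y) = T.muNat y :=
  congrArg (fun m : ℕ∞ => WithTop.untopD 0 m) (T.mu_phiPow x a y)

end TrickleGraph

/-- Transport of a `ZMod` element along an equality of moduli. -/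
def zmodCongr {m k : ℕ} (h : m = k) (a : ZMod m) : ZMod k := by subst h; exact a

theorem zmodCongr_ne_zero {m k : ℕ} (h : m = k) {a : ZMod m} (ha : a ≠ 0) :
    zmodCongr h a ≠ 0 := by subst h; exact ha

/-- A **syllable** `x^a`, where `x` is a vertex and `a ∈ ℤ_{mu x} \ {0}`. -/
def Syllable {V : Type u} [PartialOrder V] (T : TrickleGraph V) : Type u :=
  Σ x : V, {a : ZMod (T.muNat x) // a ≠ 0}

namespace Syllable

variable {V : Type u} [PartialOrder V] {T : TrickleGraph V}

/-- The element of the trickle group represented by a syllable. -/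
def elm (s : Syllable T) : TrickleGroup T :=
  (PresentedGroup.of s.1 : TrickleGroup T) ^ (ZMod.cast s.2.val : ℤ)

end Syllable

/-- Syllabic words. -/
abbrev SylWord {V : Type u} [PartialOrder V] (T : TrickleGraph V) := List (Syllable T)

/-- The element of the trickle group represented by a syllabic word. -/
def SylWord.eval {V : Type u} [PartialOrder V] {T : TrickleGraph V} (w : SylWord T) :
    TrickleGroup T :=
  (w.map Syllable.elm).prod

theorem Equiv.Perm.apply_inv_self {α : Type*} (f : Equiv.Perm α) (x : α) :
    f (f⁻¹ x) = x := f.apply_symm_apply x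

theorem Equiv.Perm.inv_apply_self {α : Type*} (f : Equiv.Perm α) (x : α) :
    f⁻¹ (f x) = x := f.symm_apply_apply x

theorem zpow_succ_apply {V : Type u} (f : Equiv.Perm V) (n : ℤ) (w : V) :
    (f ^ (n + 1)) w = f ((f ^ n) w) := by
  rw [add_comm, zpow_add, zpow_one]; rfl

theorem zpow_pred_apply {V : Type u} (f : Equiv.Perm V) (n : ℤ) (w : V) :
    (f ^ (n - 1)) w = f⁻¹ ((f ^ n) w) := by
  have h : n - 1 = -1 + n := by ring
  rw [h, zpow_add, zpow_neg_one]; rfl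

namespace TrickleGraph

variable {V : Type u} [PartialOrder V] (T : TrickleGraph V)

theorem phi_fix (x : V) : T.phi x x = x := by
  by_contra h
  exact lt_irrefl x (T.lt_of_phi_ne x x (Or.inl rfl) h)

theorem phi_inv_fix (x : V) : (T.phi x)⁻¹ x = x :=
  (T.phi x).injective (by rw [Equiv.Perm.apply_inv_self, T.phi_fix])

theorem zpow_fix (x : V) (n : ℤ) : (T.phi x ^ n) x = x := by
  induction n using Int.induction_on with
  | zero => simp
  | succ k ih => rw [zpow_succ_apply, ih, T.phi_fix]
  | pred k ih => rw [zpow_pred_apply, ih, T.phi_inv_fix]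

theorem inStar_of_le {x w : V} (h : w ≤ x) : T.graph.InStar x w :=
  h.lt_or_eq.elim (fun h' => Or.inr (T.adj_of_lt w x h').symm) Or.inl

theorem inStar_phi_inv (x y : V) (h : T.graph.InStar x y) :
    T.graph.InStar x ((T.phi x)⁻¹ y) := by
  by_contra hc
  have h1 := T.phi_apply_of_not_inStar x _ hc
  rw [Equiv.Perm.apply_inv_self] at h1
  rw [h1] at h
  exact hc h

theorem le_phi_inv {x u v : V} (hu : T.graph.InStar x u) (hv : T.graph.InStar x v)
    (h : u ≤ v) : (T.phi x)⁻¹ u ≤ (T.phi x)⁻¹ v := by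
  have h1 := T.le_phi_iff x ((T.phi x)⁻¹ v) ((T.phi x)⁻¹ u)
    (T.inStar_phi_inv x v hv) (T.inStar_phi_inv x u hu)
  simp only [Equiv.Perm.apply_inv_self] at h1
  exact h1.mp h

theorem zpow_le (x : V) : ∀ (n : ℤ) {z y : V}, z ≤ y → y ≤ x →
    (T.phi x ^ n) z ≤ (T.phi x ^ n) y ∧ (T.phi x ^ n) y ≤ x := by
  intro n
  induction n using Int.induction_on with
  | zero => intro z y h1 h2; simpa using ⟨h1, h2⟩
  | succ k ih =>
    intro z y h1 h2
    obtain ⟨h1', h2'⟩ := ih h1 h2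
    have hz' : (T.phi x ^ (k : ℤ)) z ≤ x := h1'.trans h2'
    rw [zpow_succ_apply, zpow_succ_apply]
    constructor
    · exact (T.le_phi_iff x _ _ (T.inStar_of_le h2') (T.inStar_of_le hz')).mpr h1'
    · have h3 := (T.le_phi_iff x x _ (Or.inl rfl) (T.inStar_of_le h2')).mpr h2'
      rwa [T.phi_fix] at h3
  | pred k ih =>
    intro z y h1 h2
    obtain ⟨h1', h2'⟩ := ih h1 h2
    have hz' : (T.phi x ^ (-(k : ℤ))) z ≤ x := h1'.trans h2'
    rw [zpow_pred_apply, zpow_pred_apply]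
    constructor
    · exact T.le_phi_inv (T.inStar_of_le hz') (T.inStar_of_le h2') h1'
    · have h3 := T.le_phi_inv (T.inStar_of_le h2') (Or.inl rfl) h2'
      rwa [T.phi_inv_fix] at h3

theorem zpow_lt (x : V) (n : ℤ) {z y : V} (h1 : z < y) (h2 : y ≤ x) :
    (T.phi x ^ n) z < (T.phi x ^ n) y :=
  lt_of_le_of_ne ((T.zpow_le x n h1.le h2).1)
    (fun h => h1.ne ((T.phi x ^ n).injective h))

/-- The case `a = 1` of Lemma 4.7 (strict version). -/
theorem phi_phi_zpow {x y : V} (hyx : y < x) : ∀ (b : ℤ) {z : V}, z < y →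
    T.phi x ((T.phi y ^ b) z) = (T.phi (T.phi x y) ^ b) (T.phi x z) := by
  intro b
  induction b using Int.induction_on with
  | zero => intro z _; simp
  | succ k ih =>
    intro z hz
    set z' := (T.phi y ^ (k : ℤ)) z with hz'def
    have hz'y : z' < y := by
      have h := T.zpow_lt y (k : ℤ) hz le_rfl
      rwa [T.zpow_fix y] at h
    rw [zpow_succ_apply, zpow_succ_apply, ← hz'def,
      T.phi_phi x y z' hz'y hyx, ih hz]
  | pred k ih =>
    intro z hz
    set z' := (T.phi y ^ (-(k : ℤ))) z with hz'def
    have hz'y : z' < y := by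
      have h := T.zpow_lt y (-(k : ℤ)) hz le_rfl
      rwa [T.zpow_fix y] at h
    set u := (T.phi y)⁻¹ z' with hudef
    have hu : u < y := by
      have h1 : u ≤ y := by
        have h2 := T.le_phi_inv (T.inStar_of_le hz'y.le) (Or.inl rfl) hz'y.le
        rwa [T.phi_inv_fix] at h2
      refine lt_of_le_of_ne h1 (fun h => hz'y.ne ?_)
      have : T.phi y u = T.phi y y := by rw [h]
      rw [hudef, Equiv.Perm.apply_inv_self, T.phi_fix] at this
      exact this
    have hg := T.phi_phi x y u hu hyx
    have he : T.phi y u = z' := Equiv.Perm.apply_inv_self _ _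
    rw [he] at hg
    rw [zpow_pred_apply, zpow_pred_apply, ← hz'def, ← ih hz, hg,
      Equiv.Perm.inv_apply_self]

/-- The case `a = -1` of Lemma 4.7 (strict version). -/
theorem phi_inv_phi_zpow {x y : V} (hyx : y < x) (b : ℤ) {z : V} (hz : z < y) :
    (T.phi x)⁻¹ ((T.phi y ^ b) z) = (T.phi ((T.phi x)⁻¹ y) ^ b) ((T.phi x)⁻¹ z) := by
  set y' := (T.phi x)⁻¹ y with hy'def
  set z' := (T.phi x)⁻¹ z with hz'def
  have hy' : y' < x := by
    have h1 : y' ≤ x := by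
      have h2 := T.le_phi_inv (T.inStar_of_le hyx.le) (Or.inl rfl) hyx.le
      rwa [T.phi_inv_fix] at h2
    refine lt_of_le_of_ne h1 (fun h => hyx.ne ?_)
    have : T.phi x y' = T.phi x x := by rw [h]
    rw [hy'def, Equiv.Perm.apply_inv_self, T.phi_fix] at this
    exact this
  have hz' : z' < y' := by
    have h1 : z' ≤ y' :=
      T.le_phi_inv (T.inStar_of_le (hz.le.trans hyx.le)) (T.inStar_of_le hyx.le) hz.le
    refine lt_of_le_of_ne h1 (fun h => hz.ne ?_)
    have : T.phi x z' = T.phi x y' := by rw [h]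
    rw [hy'def, hz'def, Equiv.Perm.apply_inv_self, Equiv.Perm.apply_inv_self] at this
    exact this
  have hB := T.phi_phi_zpow hy' b hz'
  have e1 : T.phi x y' = y := Equiv.Perm.apply_inv_self _ _
  have e2 : T.phi x z' = z := Equiv.Perm.apply_inv_self _ _
  rw [e1, e2] at hB
  rw [← hB, Equiv.Perm.inv_apply_self]

/-- Lemma 4.7, strict version. -/
theorem phi_zpow_phi_zpow_strict (x : V) : ∀ (a : ℤ) {y z : V}, z < y → y < x → ∀ b : ℤ,
    (T.phi x ^ a) ((T.phi y ^ b) z) =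
      (T.phi ((T.phi x ^ a) y) ^ b) ((T.phi x ^ a) z) := by
  intro a
  induction a using Int.induction_on with
  | zero => intro y z _ _ b; simp
  | succ k ih =>
    intro y z hzy hyx b
    have h1 := ih hzy hyx b
    have hy' : (T.phi x ^ (k : ℤ)) y < x := by
      have h := T.zpow_lt x (k : ℤ) hyx le_rfl
      rwa [T.zpow_fix x] at h
    have hz' : (T.phi x ^ (k : ℤ)) z < (T.phi x ^ (k : ℤ)) y := T.zpow_lt x _ hzy hyx.le
    simp only [zpow_succ_apply]
    rw [h1]
    exact T.phi_phi_zpow hy' b hz'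
  | pred k ih =>
    intro y z hzy hyx b
    have h1 := ih hzy hyx b
    have hy' : (T.phi x ^ (-(k : ℤ))) y < x := by
      have h := T.zpow_lt x (-(k : ℤ)) hyx le_rfl
      rwa [T.zpow_fix x] at h
    have hz' : (T.phi x ^ (-(k : ℤ))) z < (T.phi x ^ (-(k : ℤ))) y :=
      T.zpow_lt x _ hzy hyx.le
    simp only [zpow_pred_apply]
    rw [h1]
    exact T.phi_inv_phi_zpow hy' b hz'

end TrickleGraph

/-- **Lemma 4.7.** In a trickle graph, if `z ≤ y ≤ x` then
`(φ_x^a ∘ φ_y^b)(z) = (φ_{φ_x^a(y)}^b ∘ φ_x^a)(z)` for all integers `a, b`. -/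
theorem TrickleGraph.phi_zpow_phi_zpow {V : Type u} [PartialOrder V] (T : TrickleGraph V)
    (x y z : V) (hzy : z ≤ y) (hyx : y ≤ x) (a b : ℤ) :
    (T.phi x ^ a) ((T.phi y ^ b) z) =
      (T.phi ((T.phi x ^ a) y) ^ b) ((T.phi x ^ a) z) := by
  rcases hzy.lt_or_eq with hzy' | rfl
  · rcases hyx.lt_or_eq with hyx' | rfl
    · exact T.phi_zpow_phi_zpow_strict x a hzy' hyx' b
    · rw [T.zpow_fix y a, ← Equiv.Perm.mul_apply, ← Equiv.Perm.mul_apply,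
        ← zpow_add, ← zpow_add, add_comm]
  · rw [T.zpow_fix z b, T.zpow_fix]
end
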